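/- arXiv:1805.12179 — 3 statements merged into one kernel-verified Lean document; each statement's English description precedes it below -/
import Mathlib

section
/- Let X_1,…,X_n be i.i.d. S-valued random variables with symmetric measurable kernel φ satisfying E[φ(X_1,X_2)^2] < ∞, and let {G_1,G_2} be any partition of {1,…,n} with 2 ≤ n_1 ≤ n−2. Then B_n is first-order degenerate under this null model: for every k ∈ {1,…,n}, the conditional expectation satisfies E[B_n | X_k] = 0 almost surely. -/
open MeasureTheory ProbabilityTheory Finset

/-- Within-group U-statistic `U^{(g)} = C(n_g,2)⁻¹ ∑_{i<j, i,j ∈ G} φ(x i, x j)`. -/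
noncomputable def Uwithin {S : Type*} (φ : S → S → ℝ) (x : ℕ → S) (G : Finset ℕ) : ℝ :=
  ((G.card.choose 2 : ℕ) : ℝ)⁻¹ *
    ∑ i ∈ G, ∑ j ∈ G.filter (fun j => i < j), φ (x i) (x j)

/-- Between-group U-statistic `U^{(1,2)} = (n₁ n₂)⁻¹ ∑_{i ∈ G₁} ∑_{j ∈ G₂} φ(x i, x j)`. -/
noncomputable def Ubetween {S : Type*} (φ : S → S → ℝ) (x : ℕ → S) (G1 G2 : Finset ℕ) : ℝ :=
  ((G1.card : ℝ) * (G2.card : ℝ))⁻¹ * ∑ i ∈ G1, ∑ j ∈ G2, φ (x i) (x j)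

/-- `B_n = (n₁ n₂ / (n(n-1))) (2U^{(1,2)} - U^{(1)} - U^{(2)})` where `n = n₁ + n₂`. -/
noncomputable def BnPart {S : Type*} (φ : S → S → ℝ) (x : ℕ → S) (G1 G2 : Finset ℕ) : ℝ :=
  ((G1.card : ℝ) * (G2.card : ℝ)) /
      (((G1.card + G2.card : ℕ) : ℝ) * (((G1.card + G2.card : ℕ) : ℝ) - 1)) *
    (2 * Ubetween φ x G1 G2 - Uwithin φ x G1 - Uwithin φ x G2)

lemma sum_ite_count {G : Finset ℕ} {k : ℕ} (hk : k ∈ G) (A B : ℝ) :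
    ∑ i ∈ G, (if i = k then A else B) = A + ((G.card : ℝ) - 1) * B := by
  have h : ∀ i ∈ G, (if i = k then A else B) = B + (if i = k then A - B else 0) := by
    intro i _; by_cases h : i = k <;> simp [h]
  rw [Finset.sum_congr rfl h, Finset.sum_add_distrib, Finset.sum_const,
    Finset.sum_ite_eq' G k (fun _ => A - B), if_pos hk, nsmul_eq_mul]
  ring

lemma sum_filter_lt_product {G : Finset ℕ} (f : ℕ → ℕ → ℝ) :
    ∑ p ∈ (G ×ˢ G).filter (fun p => p.1 < p.2), f p.1 p.2
      = ∑ i ∈ G, ∑ j ∈ G.filter (fun j => i < j), f i j := by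
  rw [Finset.sum_filter, Finset.sum_product]
  simp_rw [← Finset.sum_filter]

lemma two_mul_sum_lt (G : Finset ℕ) (f : ℕ → ℕ → ℝ) (hsym : ∀ i j, f i j = f j i) :
    2 * ∑ p ∈ (G ×ˢ G).filter (fun p => p.1 < p.2), f p.1 p.2
      = (∑ i ∈ G, ∑ j ∈ G, f i j) - ∑ i ∈ G, f i i := by
  rw [sum_filter_lt_product]
  have hswap : ∑ i ∈ G, ∑ j ∈ G.filter (fun j => i < j), f i j
      = ∑ i ∈ G, ∑ j ∈ G.filter (fun j => j < i), f i j := by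
    simp_rw [Finset.sum_filter]
    rw [Finset.sum_comm]
    exact Finset.sum_congr rfl fun i _ => Finset.sum_congr rfl fun j _ => by
      by_cases h : j < i <;> simp [h, hsym i j]
  have htri : ∀ i ∈ G, ∑ j ∈ G, f i j
      = (∑ j ∈ G.filter (fun j => i < j), f i j)
        + (∑ j ∈ G.filter (fun j => j < i), f i j) + f i i := by
    intro i hi
    simp_rw [Finset.sum_filter]
    rw [← Finset.sum_add_distrib]
    have : ∀ j ∈ G, (if i < j then f i j else 0) + (if j < i then f i j else 0)
        = f i j - (if j = i then f i j else 0) := by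
      intro j _
      rcases lt_trichotomy i j with h | h | h
      · simp [h, not_lt.mpr h.le, (Nat.lt_irrefl _), h.ne']
      · simp [h, Nat.lt_irrefl]
      · simp [h, not_lt.mpr h.le, h.ne]
    rw [Finset.sum_congr rfl this, Finset.sum_sub_distrib,
      Finset.sum_ite_eq' G i (fun j => f i j), if_pos hi]
    ring
  rw [Finset.sum_congr rfl htri]
  rw [Finset.sum_add_distrib, Finset.sum_add_distrib, ← hswap]
  ring

lemma ae_sum_congr {Ω : Type*} {l : Filter Ω} {ι : Type*}
    (s : Finset ι) {f g : ι → Ω → ℝ} (h : ∀ i ∈ s, f i =ᶠ[l] g i) :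
    (∑ i ∈ s, f i) =ᶠ[l] ∑ i ∈ s, g i := by
  classical
  induction s using Finset.induction_on with
  | empty => simp
  | insert _ _ hi ih =>
      rw [Finset.sum_insert hi, Finset.sum_insert hi]
      exact (h _ (Finset.mem_insert_self _ _)).add
        (ih fun j hj => h j (Finset.mem_insert_of_mem hj))

lemma coeff_cancel (x y t c : ℝ) (hx : x ≠ 0) (hy : y ≠ 0)
    (hx1 : x - 1 ≠ 0) (hy1 : y - 1 ≠ 0) :
    2 * (x * y)⁻¹ * (y * t + (x - 1) * (y * c))
      - ((x * (x - 1) / 2)⁻¹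
          * (((x * t + (x - 1) * (t + (x - 1) * c)) - (t + (x - 1) * c)) / 2)
        + (y * (y - 1) / 2)⁻¹ * ((y * (y * c) - y * c) / 2)) = 0 := by
  field_simp
  ring

theorem key_degenerate {Ω S : Type*} [mΩ : MeasurableSpace Ω] [mS : MeasurableSpace S]
    (μ : Measure Ω) [IsProbabilityMeasure μ]
    (φ : S → S → ℝ) (hφs : ∀ a b, φ a b = φ b a)
    (n : ℕ) (X : ℕ → Ω → S)
    {m : MeasurableSpace Ω} (hm : m ≤ mΩ)
    (k : ℕ)
    (hInt : ∀ i < n, ∀ j < n, i ≠ j → Integrable (fun ω => φ (X i ω) (X j ω)) μ)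
    (h : Ω → ℝ) (c : ℝ)
    (hh : ∀ j < n, j ≠ k → μ[(fun ω => φ (X k ω) (X j ω))|m] =ᵐ[μ] h)
    (hc : ∀ i < n, ∀ j < n, i ≠ j → i ≠ k → j ≠ k →
        μ[(fun ω => φ (X i ω) (X j ω))|m] =ᵐ[μ] (fun _ => c))
    (G1 G2 : Finset ℕ) (hdisj : Disjoint G1 G2) (hunion : G1 ∪ G2 = Finset.range n)
    (hkG1 : k ∈ G1) (h1 : 2 ≤ G1.card) (h2 : 2 ≤ G2.card) :
    μ[(fun ω => BnPart φ (fun i => X i ω) G1 G2)|m] =ᵐ[μ] 0 := by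
  classical
  haveI : IsFiniteMeasure (μ.trim hm) := isFiniteMeasure_trim hm
  have hmem1 : ∀ i ∈ G1, i < n := fun i hi =>
    Finset.mem_range.mp (hunion ▸ Finset.mem_union_left G2 hi)
  have hmem2 : ∀ i ∈ G2, i < n := fun i hi =>
    Finset.mem_range.mp (hunion ▸ Finset.mem_union_right G1 hi)
  have hkG2 : k ∉ G2 := fun hk2 => (Finset.disjoint_left.mp hdisj hkG1) hk2
  set Y : ℕ × ℕ → Ω → ℝ := fun p ω => φ (X p.1 ω) (X p.2 ω) with hYdef
  set e : ℕ × ℕ → Ω → ℝ := fun p ω => if p.1 = k ∨ p.2 = k then h ω else c with hedef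
  have hY : ∀ p : ℕ × ℕ, p.1 < n → p.2 < n → p.1 ≠ p.2 → μ[Y p|m] =ᵐ[μ] e p := by
    rintro ⟨i, j⟩ hi hj hne
    by_cases hp1 : i = k
    · subst hp1
      have hjk : j ≠ i := fun hji => hne hji.symm
      have : e (i, j) = h := by funext ω; simp [hedef]
      rw [this]
      exact hh j hj hjk
    · by_cases hp2 : j = k
      · subst hp2
        have : Y (i, j) = fun ω => φ (X j ω) (X i ω) := by
          funext ω; simp [hYdef, hφs]
        rw [this]
        have he : e (i, j) = h := by funext ω; simp [hedef]
        rw [he]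
        exact hh i hi hp1
      · have he : e (i, j) = fun _ => c := by funext ω; simp [hedef, hp1, hp2]
        rw [he]
        exact hc i hi j hj hne hp1 hp2
  set P12 := G1 ×ˢ G2 with hP12
  set P1 := (G1 ×ˢ G1).filter (fun p => p.1 < p.2) with hP1
  set P2 := (G2 ×ˢ G2).filter (fun p => p.1 < p.2) with hP2
  have hgood12 : ∀ p ∈ P12, p.1 < n ∧ p.2 < n ∧ p.1 ≠ p.2 := by
    rintro ⟨i, j⟩ hp
    rw [hP12, Finset.mem_product] at hp
    exact ⟨hmem1 _ hp.1, hmem2 _ hp.2,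
      fun hij => (Finset.disjoint_left.mp hdisj hp.1) (hij ▸ hp.2)⟩
  have hgood1 : ∀ p ∈ P1, p.1 < n ∧ p.2 < n ∧ p.1 ≠ p.2 := by
    rintro ⟨i, j⟩ hp
    rw [hP1, Finset.mem_filter, Finset.mem_product] at hp
    exact ⟨hmem1 _ hp.1.1, hmem1 _ hp.1.2, Nat.ne_of_lt hp.2⟩
  have hgood2 : ∀ p ∈ P2, p.1 < n ∧ p.2 < n ∧ p.1 ≠ p.2 := by
    rintro ⟨i, j⟩ hp
    rw [hP2, Finset.mem_filter, Finset.mem_product] at hp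
    exact ⟨hmem2 _ hp.1.1, hmem2 _ hp.1.2, Nat.ne_of_lt hp.2⟩
  have hIntP : ∀ (P : Finset (ℕ × ℕ)), (∀ p ∈ P, p.1 < n ∧ p.2 < n ∧ p.1 ≠ p.2) →
      ∀ p ∈ P, Integrable (Y p) μ := fun P hP p hp =>
    hInt p.1 (hP p hp).1 p.2 (hP p hp).2.1 (hP p hp).2.2
  have hcond : ∀ (P : Finset (ℕ × ℕ)), (∀ p ∈ P, p.1 < n ∧ p.2 < n ∧ p.1 ≠ p.2) →
      μ[(∑ p ∈ P, Y p)|m] =ᵐ[μ] ∑ p ∈ P, e p := by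
    intro P hP
    exact (condExp_finsetSum (m₀ := mΩ) (m := m) (μ := μ) (hIntP P hP)).trans
      (ae_sum_congr P fun p hp => hY p (hP p hp).1 (hP p hp).2.1 (hP p hp).2.2)
  set n1 := G1.card with hn1d
  set n2 := G2.card with hn2d
  set A : ℝ := ((n1 : ℝ) * (n2 : ℝ)) /
      (((n1 + n2 : ℕ) : ℝ) * (((n1 + n2 : ℕ) : ℝ) - 1)) with hA
  set a : ℝ := A * 2 * ((n1 : ℝ) * (n2 : ℝ))⁻¹ with ha
  set b1 : ℝ := A * ((n1.choose 2 : ℕ) : ℝ)⁻¹ with hb1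
  set b2 : ℝ := A * ((n2.choose 2 : ℕ) : ℝ)⁻¹ with hb2
  have hsplit : (fun ω => BnPart φ (fun i => X i ω) G1 G2)
      = a • (∑ p ∈ P12, Y p) - (b1 • (∑ p ∈ P1, Y p) + b2 • (∑ p ∈ P2, Y p)) := by
    funext ω
    simp only [Pi.sub_apply, Pi.add_apply, Pi.smul_apply, Finset.sum_apply, smul_eq_mul]
    have e12 : ∑ p ∈ P12, Y p ω = ∑ i ∈ G1, ∑ j ∈ G2, φ (X i ω) (X j ω) := by
      rw [hP12]; exact Finset.sum_product ..
    have e1 : ∑ p ∈ P1, Y p ω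
        = ∑ i ∈ G1, ∑ j ∈ G1.filter (fun j => i < j), φ (X i ω) (X j ω) := by
      rw [hP1]; exact sum_filter_lt_product (fun i j => φ (X i ω) (X j ω))
    have e2 : ∑ p ∈ P2, Y p ω
        = ∑ i ∈ G2, ∑ j ∈ G2.filter (fun j => i < j), φ (X i ω) (X j ω) := by
      rw [hP2]; exact sum_filter_lt_product (fun i j => φ (X i ω) (X j ω))
    rw [e12, e1, e2]
    simp only [BnPart, Ubetween, Uwithin, ha, hb1, hb2, hA, ← hn1d, ← hn2d]
    ring
  rw [hsplit]
  have hi12 := integrable_finset_sum' P12 (hIntP P12 hgood12)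
  have hi1 := integrable_finset_sum' P1 (hIntP P1 hgood1)
  have hi2 := integrable_finset_sum' P2 (hIntP P2 hgood2)
  have step : μ[a • (∑ p ∈ P12, Y p) - (b1 • (∑ p ∈ P1, Y p) + b2 • (∑ p ∈ P2, Y p))|m]
      =ᵐ[μ] a • (∑ p ∈ P12, e p) - (b1 • (∑ p ∈ P1, e p) + b2 • (∑ p ∈ P2, e p)) := by
    refine (condExp_sub (hi12.smul a) ((hi1.smul b1).add (hi2.smul b2)) m).trans ?_
    refine Filter.EventuallyEq.sub ?_ ?_
    · exact (condExp_smul a _ m).trans ((hcond P12 hgood12).const_smul a)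
    · refine (condExp_add (hi1.smul b1) (hi2.smul b2) m).trans ?_
      exact Filter.EventuallyEq.add
        ((condExp_smul b1 _ m).trans ((hcond P1 hgood1).const_smul b1))
        ((condExp_smul b2 _ m).trans ((hcond P2 hgood2).const_smul b2))
  refine step.trans ?_
  -- now a pointwise identity
  have : a • (∑ p ∈ P12, e p) - (b1 • (∑ p ∈ P1, e p) + b2 • (∑ p ∈ P2, e p)) = 0 := by
    funext ω
    simp only [Pi.sub_apply, Pi.add_apply, Pi.smul_apply, Finset.sum_apply, Pi.zero_apply,
      smul_eq_mul]
    set t := h ω with ht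
    have hE12 : ∑ p ∈ P12, e p ω = (n2 : ℝ) * t + ((n1 : ℝ) - 1) * ((n2 : ℝ) * c) := by
      rw [hP12, Finset.sum_product]
      have : ∀ i ∈ G1, ∑ j ∈ G2, e (i, j) ω = if i = k then (n2 : ℝ) * t else (n2 : ℝ) * c := by
        intro i _
        have : ∀ j ∈ G2, e (i, j) ω = if i = k then t else c := by
          intro j hj
          have hjk : j ≠ k := fun hjk => hkG2 (hjk ▸ hj)
          simp [hedef, hjk, ht]
        rw [Finset.sum_congr rfl this, Finset.sum_const, nsmul_eq_mul]
        by_cases hik : i = k <;> simp [hik, mul_comm, ← hn2d]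
      rw [Finset.sum_congr rfl this, sum_ite_count hkG1]
    have hE1 : ∑ p ∈ P1, e p ω
        = (((n1 : ℝ) * t + ((n1 : ℝ) - 1) * (t + ((n1 : ℝ) - 1) * c))
            - (t + ((n1 : ℝ) - 1) * c)) / 2 := by
      have h2m := two_mul_sum_lt G1 (fun i j => e (i, j) ω)
        (fun i j => by simp [hedef, or_comm])
      have hfull : ∑ i ∈ G1, ∑ j ∈ G1, e (i, j) ω
          = (n1 : ℝ) * t + ((n1 : ℝ) - 1) * (t + ((n1 : ℝ) - 1) * c) := by
        have : ∀ i ∈ G1, ∑ j ∈ G1, e (i, j) ω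
            = if i = k then (n1 : ℝ) * t else t + ((n1 : ℝ) - 1) * c := by
          intro i _
          by_cases hik : i = k
          · have : ∀ j ∈ G1, e (i, j) ω = t := fun j _ => by simp [hedef, hik, ht]
            rw [Finset.sum_congr rfl this, Finset.sum_const, nsmul_eq_mul]
            simp [hik, ← hn1d]
          · have : ∀ j ∈ G1, e (i, j) ω = if j = k then t else c := fun j _ => by
              simp [hedef, hik, ht]
            rw [Finset.sum_congr rfl this, sum_ite_count hkG1]
            simp [hik, ← hn1d]
        rw [Finset.sum_congr rfl this, sum_ite_count hkG1]
      have hdiag : ∑ i ∈ G1, e (i, i) ω = t + ((n1 : ℝ) - 1) * c := by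
        have : ∀ i ∈ G1, e (i, i) ω = if i = k then t else c := fun i _ => by
          simp [hedef, ht]
        rw [Finset.sum_congr rfl this, sum_ite_count hkG1]
      have := h2m
      rw [hfull, hdiag] at this
      rw [hP1]
      linarith [this]
    have hE2 : ∑ p ∈ P2, e p ω = ((n2 : ℝ) * ((n2 : ℝ) * c) - (n2 : ℝ) * c) / 2 := by
      have h2m := two_mul_sum_lt G2 (fun i j => e (i, j) ω)
        (fun i j => by simp [hedef, or_comm])
      have hall : ∀ i ∈ G2, ∀ j ∈ G2, e (i, j) ω = c := by
        intro i hi j hj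
        have h1' : i ≠ k := fun hik => hkG2 (hik ▸ hi)
        have h2' : j ≠ k := fun hjk => hkG2 (hjk ▸ hj)
        simp [hedef, h1', h2']
      have hfull : ∑ i ∈ G2, ∑ j ∈ G2, e (i, j) ω = (n2 : ℝ) * ((n2 : ℝ) * c) := by
        rw [Finset.sum_congr rfl (fun i hi => Finset.sum_congr rfl (hall i hi))]
        rw [Finset.sum_congr rfl (fun i (_ : i ∈ G2) => Finset.sum_const c),
          Finset.sum_const]
        simp only [nsmul_eq_mul, smul_eq_mul]
        try ring
      have hdiag : ∑ i ∈ G2, e (i, i) ω = (n2 : ℝ) * c := by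
        rw [Finset.sum_congr rfl (fun i hi => hall i hi i hi), Finset.sum_const,
          nsmul_eq_mul]
      have := h2m
      rw [hfull, hdiag] at this
      rw [hP2]
      linarith [this]
    rw [hE12, hE1, hE2, ha, hb1, hb2]
    have hch1 : ((n1.choose 2 : ℕ) : ℝ) = (n1 : ℝ) * ((n1 : ℝ) - 1) / 2 :=
      Nat.cast_choose_two ℝ n1
    have hch2 : ((n2.choose 2 : ℕ) : ℝ) = (n2 : ℝ) * ((n2 : ℝ) - 1) / 2 :=
      Nat.cast_choose_two ℝ n2
    have hn1pos : (2 : ℝ) ≤ (n1 : ℝ) := by exact_mod_cast h1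
    have hn2pos : (2 : ℝ) ≤ (n2 : ℝ) := by exact_mod_cast h2
    have h10 : (n1 : ℝ) ≠ 0 := by linarith
    have h20 : (n2 : ℝ) ≠ 0 := by linarith
    have h11 : (n1 : ℝ) - 1 ≠ 0 := by linarith
    have h21 : (n2 : ℝ) - 1 ≠ 0 := by linarith
    rw [hch1, hch2]
    have key0 := coeff_cancel (n1 : ℝ) (n2 : ℝ) t c h10 h20 h11 h21
    linear_combination A * key0
  rw [this]

lemma BnPart_comm {S : Type*} (φ : S → S → ℝ) (hφs : ∀ a b, φ a b = φ b a)
    (x : ℕ → S) (G1 G2 : Finset ℕ) : BnPart φ x G1 G2 = BnPart φ x G2 G1 := by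
  unfold BnPart Ubetween Uwithin
  have hsum : ∑ i ∈ G2, ∑ j ∈ G1, φ (x i) (x j) = ∑ i ∈ G1, ∑ j ∈ G2, φ (x i) (x j) := by
    rw [Finset.sum_comm]
    exact Finset.sum_congr rfl fun i _ => Finset.sum_congr rfl fun j _ => hφs _ _
  rw [hsum, Nat.add_comm G2.card G1.card]
  ring

/-- for i.i.d. `X 0, …, X (n-1)` and any partition `{G₁, G₂}` of
`{0,…,n-1}` with `2 ≤ n₁ ≤ n-2`, `B_n` is first-order degenerate under the null
model: for every `k < n`, `E[B_n | X_k] = 0` almost surely. -/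
theorem BnPart_first_order_degenerate {Ω S : Type*} [MeasurableSpace Ω]
    [mS : MeasurableSpace S] (μ : Measure Ω) [IsProbabilityMeasure μ]
    (φ : S → S → ℝ) (hφm : Measurable (Function.uncurry φ))
    (hφs : ∀ a b, φ a b = φ b a)
    (n n1 n2 : ℕ) (X : ℕ → Ω → S) (hXm : ∀ i, Measurable (X i))
    (hindep : iIndepFun (fun i : Fin n => X i.1) μ)
    (hident : ∀ i < n, IdentDistrib (X i) (X 0) μ μ)
    (hL2 : Integrable (fun ω => (φ (X 0 ω) (X 1 ω)) ^ 2) μ)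
    (G1 G2 : Finset ℕ) (hdisj : Disjoint G1 G2) (hunion : G1 ∪ G2 = Finset.range n)
    (hn1 : G1.card = n1) (hn2 : G2.card = n2)
    (h1 : 2 ≤ n1) (h1' : n1 ≤ n - 2) (hn : n = n1 + n2) :
    ∀ k < n,
      μ[(fun ω => BnPart φ (fun i => X i ω) G1 G2) | MeasurableSpace.comap (X k) mS]
        =ᵐ[μ] 0 := by
  classical
  intro k hk
  have h2 : 2 ≤ n2 := by omega
  have hn4 : 4 ≤ n := by omega
  have hle := measurable_iff_comap_le.mp (hXm k)
  haveI : IsFiniteMeasure (μ.trim hle) := isFiniteMeasure_trim hle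
  set ν := μ.map (X 0) with hν
  have pairmeas : ∀ i j : ℕ, Measurable (fun ω => (X i ω, X j ω)) :=
    fun i j => (hXm i).prodMk (hXm j)
  have hlaw : ∀ i < n, ∀ j < n, i ≠ j →
      μ.map (fun ω => (X i ω, X j ω)) = ν.prod ν := by
    intro i hi j hj hij
    have hIF : IndepFun (X i) (X j) μ :=
      hindep.indepFun (i := ⟨i, hi⟩) (j := ⟨j, hj⟩)
        (fun hcon => hij (congrArg Fin.val hcon))
    rw [(indepFun_iff_map_prod_eq_prod_map_map (hXm i).aemeasurable
      (hXm j).aemeasurable).mp hIF, (hident i hi).map_eq, (hident j hj).map_eq]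
  have hlaw01 : μ.map (fun ω => (X 0 ω, X 1 ω)) = ν.prod ν :=
    hlaw 0 (by omega) 1 (by omega) (by omega)
  have hUInt : Integrable (Function.uncurry φ) (ν.prod ν) := by
    have hsq : Integrable (fun p : S × S => (Function.uncurry φ p) ^ 2) (ν.prod ν) := by
      rw [← hlaw01]
      rw [integrable_map_measure ((hφm.pow_const 2).aestronglyMeasurable)
        (pairmeas 0 1).aemeasurable]
      exact hL2
    exact ((memLp_two_iff_integrable_sq hφm.aestronglyMeasurable).mpr hsq).integrable
      one_le_two
  have hInt : ∀ i < n, ∀ j < n, i ≠ j →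
      Integrable (fun ω => φ (X i ω) (X j ω)) μ := by
    intro i hi j hj hij
    have := (integrable_map_measure hφm.aestronglyMeasurable
      (pairmeas i j).aemeasurable).mp (by rw [hlaw i hi j hj hij]; exact hUInt)
    exact this
  set c : ℝ := ∫ p, Function.uncurry φ p ∂(ν.prod ν) with hcdef
  have hc : ∀ i < n, ∀ j < n, i ≠ j → i ≠ k → j ≠ k →
      μ[(fun ω => φ (X i ω) (X j ω))|(MeasurableSpace.comap (X k) mS)] =ᵐ[μ] (fun _ => c) := by
    intro i hi j hj hij hik hjk
    have hle1 := measurable_iff_comap_le.mp (pairmeas i j)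
    have hsm : StronglyMeasurable[MeasurableSpace.comap (fun ω => (X i ω, X j ω))
        inferInstance] (fun ω => φ (X i ω) (X j ω)) :=
      (hφm.comp (measurable_iff_comap_le.mpr le_rfl)).stronglyMeasurable
    have hindp : Indep (MeasurableSpace.comap (fun ω => (X i ω, X j ω)) inferInstance)
        (MeasurableSpace.comap (X k) mS) μ :=
      (IndepFun_iff_Indep _ _ _).mp
        (hindep.indepFun_prodMk (fun l => hXm l.1) ⟨i, hi⟩ ⟨j, hj⟩ ⟨k, hk⟩
          (fun hcon => hik (congrArg Fin.val hcon))
          (fun hcon => hjk (congrArg Fin.val hcon)))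
    refine (condExp_indep_eq hle1 hle hsm hindp).trans ?_
    have : (∫ ω, φ (X i ω) (X j ω) ∂μ) = c := by
      rw [hcdef, ← hlaw i hi j hj hij,
        integral_map (pairmeas i j).aemeasurable hφm.aestronglyMeasurable]
      rfl
    rw [show (fun _ : Ω => ∫ ω, φ (X i ω) (X j ω) ∂μ) = fun _ : Ω => c by rw [this]]
  set j₀ : ℕ := if k = 0 then 1 else 0 with hj₀def
  have hj₀n : j₀ < n := by rw [hj₀def]; split <;> omega
  have hj₀k : j₀ ≠ k := by rw [hj₀def]; split <;> omega
  set h : Ω → ℝ := μ[(fun ω => φ (X k ω) (X j₀ ω))|(MeasurableSpace.comap (X k) mS)] with hhdef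
  have hsetint : ∀ j < n, j ≠ k → ∀ A : Set S, MeasurableSet A →
      ∫ ω in X k ⁻¹' A, φ (X k ω) (X j ω) ∂μ
        = ∫ p in A ×ˢ Set.univ, Function.uncurry φ p ∂(ν.prod ν) := by
    intro j hj hjk A hA
    have hpre : (fun ω => (X k ω, X j ω)) ⁻¹' (A ×ˢ Set.univ) = X k ⁻¹' A := by
      ext ω; simp
    rw [← hpre, ← hlaw k hk j hj (fun hcon => hjk hcon.symm)]
    exact (setIntegral_map (hA.prod MeasurableSet.univ) hφm.aestronglyMeasurable
      (pairmeas k j).aemeasurable).symm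
  have hh : ∀ j < n, j ≠ k → μ[(fun ω => φ (X k ω) (X j ω))|(MeasurableSpace.comap (X k) mS)] =ᵐ[μ] h := by
    intro j hj hjk
    refine (ae_eq_condExp_of_forall_setIntegral_eq hle
      (hInt k hk j hj (fun hcon => hjk hcon.symm))
      (fun s _ _ => integrable_condExp.integrableOn) (fun s hs _ => ?_)
      (StronglyMeasurable.aestronglyMeasurable stronglyMeasurable_condExp)).symm
    obtain ⟨A, hA, rfl⟩ := hs
    rw [hsetint j hj hjk A hA, ← hsetint j₀ hj₀n hj₀k A hA]
    exact setIntegral_condExp hle (hInt k hk j₀ hj₀n (fun hcon => hj₀k hcon.symm)) ⟨A, hA, rfl⟩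
  have hkmem : k ∈ G1 ∪ G2 := by rw [hunion]; exact Finset.mem_range.mpr hk
  rcases Finset.mem_union.mp hkmem with hkG1 | hkG2
  · exact key_degenerate μ φ hφs n X hle k hInt h c hh hc G1 G2 hdisj hunion hkG1
      (hn1 ▸ h1) (hn2 ▸ h2)
  · have hswap : (fun ω => BnPart φ (fun i => X i ω) G1 G2)
        = fun ω => BnPart φ (fun i => X i ω) G2 G1 :=
      funext fun ω => BnPart_comm φ hφs _ G1 G2
    rw [hswap]
    exact key_degenerate μ φ hφs n X hle k hInt h c hh hc G2 G1 hdisj.symm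
      (by rw [Finset.union_comm]; exact hunion) hkG2 (hn2 ▸ h2) (hn1 ▸ h1)
end

section
/- Let X_1, X_2, … be i.i.d. S-valued random variables with symmetric measurable kernel φ satisfying E[φ(X_1,X_2)^2] < ∞, and for each n ≥ 3 let B_n be the singleton-group statistic computed from X_1,…,X_n with G_1 = {X_1}. Then n^2 · Var(B_n) → σ_1^2 as n → ∞, where σ_1^2 = Var(φ_1(X_1)). -/
open MeasureTheory ProbabilityTheory Finset Filter

/-- Cauchy-Schwarz for integrals of products of L² functions. -/
lemma BnAux.abs_integral_mul_le {α : Type*} [MeasurableSpace α] {μ : Measure α} {f g : α → ℝ}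
    (hf : MemLp f 2 μ) (hg : MemLp g 2 μ) :
    |∫ a, f a * g a ∂μ| ≤ Real.sqrt (∫ a, f a ^ 2 ∂μ) * Real.sqrt (∫ a, g a ^ 2 ∂μ) := by
  have hconj : (2:ℝ).HolderConjugate 2 := by constructor <;> norm_num
  have h2 : ENNReal.ofReal (2:ℝ) = 2 := by
    rw [show ((2:ℝ)) = ((2:ℕ):ℝ) by norm_num, ENNReal.ofReal_natCast]; norm_num
  have h := integral_mul_norm_le_Lp_mul_Lq hconj (h2 ▸ hf) (h2 ▸ hg)
  have hnorm : ∀ (h : α → ℝ), (fun a => ‖h a‖ ^ (2:ℝ)) = fun a => h a ^ 2 := by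
    intro h; funext a
    rw [show (2:ℝ) = ((2:ℕ):ℝ) by norm_num, Real.rpow_natCast]
    simp [sq_abs]
  calc |∫ a, f a * g a ∂μ| ≤ ∫ a, |f a * g a| ∂μ := by
        rw [← Real.norm_eq_abs]
        exact (norm_integral_le_integral_norm _).trans (le_of_eq (by simp [Real.norm_eq_abs, abs_mul]))
    _ = ∫ a, ‖f a‖ * ‖g a‖ ∂μ := by simp [abs_mul]
    _ ≤ (∫ a, ‖f a‖ ^ (2:ℝ) ∂μ) ^ (1/(2:ℝ)) * (∫ a, ‖g a‖ ^ (2:ℝ) ∂μ) ^ (1/(2:ℝ)) := h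
    _ = Real.sqrt (∫ a, f a ^ 2 ∂μ) * Real.sqrt (∫ a, g a ^ 2 ∂μ) := by
        rw [hnorm f, hnorm g, Real.sqrt_eq_rpow, Real.sqrt_eq_rpow]

/-- `(∫ |f|)² ≤ ∫ f²` over a probability measure. -/
lemma BnAux.sq_integral_abs_le {α : Type*} [MeasurableSpace α] {μ : Measure α}
    [IsProbabilityMeasure μ] {f : α → ℝ} (hf : MemLp f 2 μ) :
    (∫ a, |f a| ∂μ) ^ 2 ≤ ∫ a, f a ^ 2 ∂μ := by
  have h := BnAux.abs_integral_mul_le hf.abs (memLp_const (1:ℝ))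
  simp only [mul_one, Pi.abs_apply] at h
  have h1 : ∫ a, (1:ℝ)^2 ∂μ = 1 := by simp
  rw [h1, Real.sqrt_one, mul_one] at h
  have habs : |∫ a, |f a| ∂μ| = ∫ a, |f a| ∂μ :=
    abs_of_nonneg (integral_nonneg fun a => abs_nonneg _)
  have hsq : ∀ a, |f a| ^ 2 = f a ^ 2 := fun a => sq_abs _
  rw [habs] at h
  simp only [hsq] at h
  have h0 : 0 ≤ ∫ a, f a ^ 2 ∂μ := integral_nonneg fun a => sq_nonneg _
  calc (∫ a, |f a| ∂μ)^2 ≤ (Real.sqrt (∫ a, f a ^ 2 ∂μ))^2 := by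
        apply pow_le_pow_left₀ (integral_nonneg fun a => abs_nonneg _) h
    _ = ∫ a, f a ^ 2 ∂μ := Real.sq_sqrt h0

/-- counting: `∑_{i=1}^{n-1} (n - (i+1)) = C(n-1, 2)`. -/
lemma BnAux.count_lemma (n : ℕ) : ∑ i ∈ Finset.Ico 1 n, (n - (i+1)) = (n-1).choose 2 := by
  rw [Finset.sum_Ico_eq_sum_range]
  have h : ∀ k, n - (1 + k + 1) = (n-1) - 1 - k := fun k => by omega
  calc ∑ k ∈ Finset.range (n-1), (n - (1 + k + 1))
      = ∑ k ∈ Finset.range (n-1), ((n-1) - 1 - k) := Finset.sum_congr rfl fun k _ => h k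
    _ = ∑ k ∈ Finset.range (n-1), k := Finset.sum_range_reflect id (n-1)
    _ = (n-1) * ((n-1) - 1) / 2 := Finset.sum_range_id (n-1)
    _ = (n-1).choose 2 := (Nat.choose_two_right (n-1)).symm

lemma BnAux.sum_ite_le {s : Finset ℕ} (i : ℕ) {c : ℝ} (hc : 0 ≤ c) :
    ∑ j ∈ s, (if j = i then c else 0) ≤ c := by
  rw [Finset.sum_ite_eq' s i (fun _ => c)]
  split <;> simp [hc]

/-- Between-group U-statistic for the singleton group `G₁ = {x 0}`. -/
noncomputable def U12 {S : Type*} (φ : S → S → ℝ) (n : ℕ) (x : ℕ → S) : ℝ :=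
  ((n : ℝ) - 1)⁻¹ * ∑ j ∈ Finset.Ico 1 n, φ (x 0) (x j)

/-- Within-group U-statistic for the group `G₂ = {x 1, …, x (n-1)}`. -/
noncomputable def U2 {S : Type*} (φ : S → S → ℝ) (n : ℕ) (x : ℕ → S) : ℝ :=
  (((n - 1).choose 2 : ℕ) : ℝ)⁻¹ *
    ∑ i ∈ Finset.Ico 1 n, ∑ j ∈ Finset.Ico (i + 1) n, φ (x i) (x j)

/-- The singleton-group statistic `B_n = (1/n) (U^{(1,2)} - U^{(2)})`. -/
noncomputable def Bn1 {S : Type*} (φ : S → S → ℝ) (n : ℕ) (x : ℕ → S) : ℝ :=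
  (n : ℝ)⁻¹ * (U12 φ n x - U2 φ n x)

set_option maxHeartbeats 2000000 in
/-- for an i.i.d. sequence `X 0, X 1, …` with
`E[φ(X₁,X₂)²] < ∞`, the singleton-group statistics satisfy
`n² Var(B_n) → σ₁² = Var(φ₁(X₁))` as `n → ∞`. -/
theorem nsq_variance_singleton_Bn_tendsto {Ω S : Type*} [MeasurableSpace Ω]
    [mS : MeasurableSpace S] (μ : Measure Ω) [IsProbabilityMeasure μ]
    (φ : S → S → ℝ) (hφm : Measurable (Function.uncurry φ))
    (hφs : ∀ a b, φ a b = φ b a)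
    (X : ℕ → Ω → S) (hXm : ∀ i, Measurable (X i))
    (hindep : iIndepFun X μ)
    (hident : ∀ i, IdentDistrib (X i) (X 0) μ μ)
    (hL2 : Integrable (fun ω => (φ (X 0 ω) (X 1 ω)) ^ 2) μ)
    (φ1 : S → ℝ) (hφ1 : ∀ x, φ1 x = ∫ ω, φ x (X 1 ω) ∂μ)
    (σ1sq : ℝ) (hσ1 : σ1sq = variance (fun ω => φ1 (X 0 ω)) μ) :
    Tendsto (fun n : ℕ => (n : ℝ) ^ 2 * variance (fun ω => Bn1 φ n (fun i => X i ω)) μ)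
      atTop (nhds σ1sq) := by
  classical
  -- basic setup
  set ν : Measure S := μ.map (X 0) with hνdef
  have hνprob : IsProbabilityMeasure ν := Measure.isProbabilityMeasure_map (hXm 0).aemeasurable
  have hmap : ∀ i, μ.map (X i) = ν := fun i => (hident i).map_eq
  have hφum : Measurable (fun p : S × S => φ p.1 p.2) := hφm
  set θ : ℝ := ∫ p : S × S, φ p.1 p.2 ∂(ν.prod ν) with hθdef
  set ψ : S → S → ℝ := fun a b => φ a b - θ with hψdef
  have hψs : ∀ a b, ψ a b = ψ b a := fun a b => by simp only [hψdef, hφs a b]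
  have hψum : Measurable (fun p : S × S => ψ p.1 p.2) := hφum.sub measurable_const
  have hpairm : ∀ a b : ℕ, Measurable (fun ω => (X a ω, X b ω)) :=
    fun a b => (hXm a).prodMk (hXm b)
  -- law of a pair with distinct indices
  have hpair : ∀ a b : ℕ, a ≠ b → μ.map (fun ω => (X a ω, X b ω)) = ν.prod ν := by
    intro a b hab
    have h : IndepFun (X a) (X b) μ := hindep.indepFun hab
    rw [indepFun_iff_map_prod_eq_prod_map_map (hXm a).aemeasurable (hXm b).aemeasurable] at h
    rw [h, hmap a, hmap b]
  -- L² structure of the kernel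
  have hφu2 : MemLp (fun p : S × S => φ p.1 p.2) 2 (ν.prod ν) := by
    rw [← hpair 0 1 zero_ne_one,
      memLp_map_measure_iff hφum.aestronglyMeasurable (hpairm 0 1).aemeasurable]
    exact (memLp_two_iff_integrable_sq
      ((hφum.comp (hpairm 0 1)).aestronglyMeasurable)).2 hL2
  have hφuint : Integrable (fun p : S × S => φ p.1 p.2) (ν.prod ν) := hφu2.integrable one_le_two
  have hψu2 : MemLp (fun p : S × S => ψ p.1 p.2) 2 (ν.prod ν) := by
    exact hφu2.sub (memLp_const θ)
  have hψuint : Integrable (fun p : S × S => ψ p.1 p.2) (ν.prod ν) := hψu2.integrable one_le_two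
  have hψusq_int : Integrable (fun p : S × S => ψ p.1 p.2 ^ 2) (ν.prod ν) := hψu2.integrable_sq
  have hψuzero : ∫ p : S × S, ψ p.1 p.2 ∂(ν.prod ν) = 0 := by
    simp only [hψdef]
    rw [integral_sub hφuint (integrable_const θ), integral_const]
    simp [hθdef]
  -- the centered kernel evaluated along the sample
  set T : ℕ → ℕ → Ω → ℝ := fun a b ω => ψ (X a ω) (X b ω) with hTdef
  have hTsymm : ∀ a b, T a b = T b a := fun a b => funext fun ω => hψs _ _
  have hTm : ∀ a b, Measurable (T a b) := fun a b => hψum.comp (hpairm a b)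
  have hT2 : ∀ a b, a ≠ b → MemLp (T a b) 2 μ := by
    intro a b hab
    have h := hψu2
    rw [← hpair a b hab,
      memLp_map_measure_iff hψum.aestronglyMeasurable (hpairm a b).aemeasurable] at h
    exact h
  have hTint : ∀ a b, a ≠ b → Integrable (T a b) μ :=
    fun a b hab => (hT2 a b hab).integrable one_le_two
  have hT0 : ∀ a b, a ≠ b → ∫ ω, T a b ω ∂μ = 0 := by
    intro a b hab
    have h : ∫ ω, T a b ω ∂μ = ∫ p : S × S, ψ p.1 p.2 ∂(ν.prod ν) := by
      rw [← hpair a b hab, integral_map (hpairm a b).aemeasurable hψum.aestronglyMeasurable]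
    rw [h, hψuzero]
  set s2 : ℝ := ∫ p : S × S, ψ p.1 p.2 ^ 2 ∂(ν.prod ν) with hs2def
  have hs2nonneg : 0 ≤ s2 := integral_nonneg fun p => sq_nonneg _
  have hTsq : ∀ a b, a ≠ b → ∫ ω, T a b ω ^ 2 ∂μ = s2 := by
    intro a b hab
    have h : ∫ ω, T a b ω ^ 2 ∂μ = ∫ p : S × S, ψ p.1 p.2 ^ 2 ∂(ν.prod ν) := by
      rw [← hpair a b hab, integral_map (hpairm a b).aemeasurable
        ((hψum.pow_const 2).aestronglyMeasurable)]
    rw [h, hs2def]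
  have hTTint : ∀ a b c d, a ≠ b → c ≠ d → Integrable (fun ω => T a b ω * T c d ω) μ := by
    intro a b c d hab hcd
    have h : MemLp (T a b • T c d) 1 μ :=
      (hT2 c d hcd).smul (hT2 a b hab)
    rw [memLp_one_iff_integrable] at h
    exact h
  have hCS : ∀ a b c d, a ≠ b → c ≠ d → |∫ ω, T a b ω * T c d ω ∂μ| ≤ s2 := by
    intro a b c d hab hcd
    have h := BnAux.abs_integral_mul_le (hT2 a b hab) (hT2 c d hcd)
    rw [hTsq a b hab, hTsq c d hcd, Real.mul_self_sqrt hs2nonneg] at h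
    exact h
  have hTdisj : ∀ a b c d : ℕ, a ≠ b → c ≠ d → a ≠ c → a ≠ d → b ≠ c → b ≠ d →
      ∫ ω, T a b ω * T c d ω ∂μ = 0 := by
    intro a b c d hab hcd hac had hbc hbd
    have hind : IndepFun (T a b) (T c d) μ :=
      (hindep.indepFun_prodMk_prodMk hXm a b c d hac had hbc hbd).comp hψum hψum
    have h := hind.integral_mul_eq_mul_integral (hTm a b).aestronglyMeasurable (hTm c d).aestronglyMeasurable
    simpa [Pi.mul_apply, hT0 a b hab, hT0 c d hcd] using h
  -- conditional expectation function p1 and σ1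
  set p1 : S → ℝ := fun z => ∫ x, ψ z x ∂ν with hp1def
  set σ1 : ℝ := ∫ z, p1 z ^ 2 ∂ν with hσ1def
  have hp1m : StronglyMeasurable p1 :=
    StronglyMeasurable.integral_prod_right hψum.stronglyMeasurable
  have hJint : Integrable (fun z => ∫ x, ψ z x ^ 2 ∂ν) ν := hψusq_int.integral_prod_left
  have hsliceInt : ∀ᵐ z ∂ν, Integrable (fun x => ψ z x) ν := hψuint.prod_right_ae
  have hslice2 : ∀ᵐ z ∂ν, MemLp (fun x => ψ z x) 2 ν := by
    filter_upwards [hψusq_int.prod_right_ae] with z hz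
    exact (memLp_two_iff_integrable_sq
      ((hψum.comp measurable_prodMk_left).aestronglyMeasurable)).2 hz
  have hIbound : ∀ᵐ z ∂ν, (∫ x, |ψ z x| ∂ν) ^ 2 ≤ ∫ x, ψ z x ^ 2 ∂ν := by
    filter_upwards [hslice2] with z hz using BnAux.sq_integral_abs_le hz
  have hp1sq_le : ∀ᵐ z ∂ν, p1 z ^ 2 ≤ ∫ x, ψ z x ^ 2 ∂ν := by
    filter_upwards [hIbound] with z hz
    calc p1 z ^ 2 = |p1 z| ^ 2 := (sq_abs _).symm
      _ ≤ (∫ x, |ψ z x| ∂ν) ^ 2 := by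
          apply pow_le_pow_left₀ (abs_nonneg _)
          rw [← Real.norm_eq_abs]
          exact (norm_integral_le_integral_norm _).trans_eq (by simp [Real.norm_eq_abs])
      _ ≤ _ := hz
  have hp1L2 : MemLp p1 2 ν := by
    rw [memLp_two_iff_integrable_sq hp1m.aestronglyMeasurable]
    apply Integrable.mono' hJint
    · have : StronglyMeasurable (fun z => p1 z ^ 2) := by
        simp_rw [sq]; exact hp1m.mul hp1m
      exact this.aestronglyMeasurable
    · filter_upwards [hp1sq_le] with z hz
      rw [Real.norm_eq_abs, abs_of_nonneg (sq_nonneg _)]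
      exact hz
  -- shared-index evaluation
  have hshared : ∀ a b c : ℕ, a ≠ b → a ≠ c → b ≠ c → ∫ ω, T a c ω * T b c ω ∂μ = σ1 := by
    intro a b c hab hac hbc
    have hip : IndepFun (X c) (fun ω => (X a ω, X b ω)) μ :=
      (hindep.indepFun_prodMk hXm a b c hac hbc).symm
    have hlaw : μ.map (fun ω => (X c ω, (X a ω, X b ω))) = ν.prod (ν.prod ν) := by
      rw [(indepFun_iff_map_prod_eq_prod_map_map (hXm c).aemeasurable
        (hpairm a b).aemeasurable).1 hip, hmap c, hpair a b hab]
    set g : S × (S × S) → ℝ := fun q => ψ q.1 q.2.1 * ψ q.1 q.2.2 with hgdef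
    have hgm : Measurable g := by
      apply Measurable.mul
      · exact hψum.comp (measurable_fst.prodMk (measurable_fst.comp measurable_snd))
      · exact hψum.comp (measurable_fst.prodMk (measurable_snd.comp measurable_snd))
    have hinner : ∀ z : S, ∫ w : S × S, g (z, w) ∂(ν.prod ν) = p1 z ^ 2 := by
      intro z
      have h1 : ∫ w : S × S, g (z, w) ∂(ν.prod ν)
          = ∫ w : S × S, ψ z w.1 * ψ z w.2 ∂(ν.prod ν) := rfl
      rw [h1, integral_prod_mul (fun x => ψ z x) (fun x => ψ z x), hp1def, sq]
    have habsm2 : StronglyMeasurable (fun z => ∫ x, |ψ z x| ∂ν) :=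
      StronglyMeasurable.integral_prod_right
        (hψum.abs.stronglyMeasurable)
    have hgint : Integrable g (ν.prod (ν.prod ν)) := by
      rw [integrable_prod_iff hgm.aestronglyMeasurable]
      constructor
      · filter_upwards [hsliceInt] with z hz
        exact hz.mul_prod hz
      · have heq : (fun z => ∫ w : S × S, ‖g (z, w)‖ ∂(ν.prod ν))
            = fun z => (∫ x, |ψ z x| ∂ν) * ∫ x, |ψ z x| ∂ν := by
          funext z
          have h2 : (fun w : S × S => ‖g (z, w)‖) = fun w : S × S => |ψ z w.1| * |ψ z w.2| :=
            funext fun w => by simp [hgdef, abs_mul, Real.norm_eq_abs]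
          rw [h2]
          exact integral_prod_mul (fun x => |ψ z x|) fun x => |ψ z x|
        rw [heq]
        apply Integrable.mono' hJint (habsm2.mul habsm2).aestronglyMeasurable
        filter_upwards [hIbound] with z hz
        have h0 : 0 ≤ ∫ x, |ψ z x| ∂ν := integral_nonneg fun x => abs_nonneg _
        calc ‖(∫ x, |ψ z x| ∂ν) * ∫ x, |ψ z x| ∂ν‖ = (∫ x, |ψ z x| ∂ν) ^ 2 := by
              rw [Real.norm_eq_abs, abs_of_nonneg (mul_nonneg h0 h0), sq]
          _ ≤ _ := hz
    have hcompm : Measurable (fun ω => (X c ω, (X a ω, X b ω))) :=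
      (hXm c).prodMk (hpairm a b)
    calc ∫ ω, T a c ω * T b c ω ∂μ
        = ∫ ω, g ((X c ω, (X a ω, X b ω))) ∂μ := by
          apply integral_congr_ae
          apply Eventually.of_forall
          intro ω
          simp only [hgdef, hTdef]
          rw [hψs (X a ω) (X c ω), hψs (X b ω) (X c ω)]
      _ = ∫ q, g q ∂(ν.prod (ν.prod ν)) := by
          rw [← hlaw, integral_map hcompm.aemeasurable hgm.aestronglyMeasurable]
      _ = ∫ z, ∫ w : S × S, g (z, w) ∂(ν.prod ν) ∂ν := integral_prod g hgint
      _ = ∫ z, p1 z ^ 2 ∂ν := by simp only [hinner]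
      _ = σ1 := hσ1def.symm
  -- identify σ1 with σ1sq
  have hφslice : ∀ᵐ z ∂ν, Integrable (fun x => φ z x) ν := hφuint.prod_right_ae
  have hφ1ν : ∀ x, φ1 x = ∫ y, φ x y ∂ν := by
    intro x
    have hm1 : AEStronglyMeasurable (fun y => φ x y) (μ.map (X 1)) :=
      (hφm.comp measurable_prodMk_left).aestronglyMeasurable
    rw [hφ1 x, ← hmap 1, integral_map (hXm 1).aemeasurable hm1]
  have hφ1m : StronglyMeasurable φ1 := by
    have h : φ1 = fun x => ∫ y, φ x y ∂ν := funext hφ1ν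
    rw [h]
    exact StronglyMeasurable.integral_prod_right hφm.stronglyMeasurable
  have hp1eq : ∀ᵐ z ∂ν, p1 z = φ1 z - θ := by
    filter_upwards [hφslice] with z hz
    have h : p1 z = ∫ x, (φ z x - θ) ∂ν := rfl
    rw [h, integral_sub hz (integrable_const θ), integral_const, hφ1ν z]
    simp
  have hφ1L2ν : MemLp φ1 2 ν := by
    apply MemLp.ae_eq ?_ (hp1L2.add (memLp_const θ))
    filter_upwards [hp1eq] with z hz
    simp [hz]
  have hφ1intν : Integrable φ1 ν := hφ1L2ν.integrable one_le_two
  have hφ1sqint : Integrable (fun z => φ1 z ^ 2) ν := hφ1L2ν.integrable_sq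
  have hintφ1 : ∫ z, φ1 z ∂ν = θ := by
    have h : ∫ z, φ1 z ∂ν = ∫ z, ∫ y, φ z y ∂ν ∂ν := by
      apply integral_congr_ae (Eventually.of_forall fun z => hφ1ν z)
    rw [h, hθdef]
    exact integral_integral hφuint
  have hσeq : σ1sq = σ1 := by
    have hφ1X0L2 : MemLp (fun ω => φ1 (X 0 ω)) 2 μ := by
      have h := hφ1L2ν
      rw [hνdef, memLp_map_measure_iff hφ1m.aestronglyMeasurable (hXm 0).aemeasurable] at h
      exact h
    have hφ1sqm : StronglyMeasurable (fun z => φ1 z ^ 2) := by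
      simp_rw [sq]; exact hφ1m.mul hφ1m
    have h1 : ∫ ω, φ1 (X 0 ω) ^ 2 ∂μ = ∫ z, φ1 z ^ 2 ∂ν := by
      rw [← hmap 0, integral_map (hXm 0).aemeasurable hφ1sqm.aestronglyMeasurable]
    have h2 : ∫ ω, φ1 (X 0 ω) ∂μ = θ := by
      rw [← hintφ1, ← hmap 0, integral_map (hXm 0).aemeasurable hφ1m.aestronglyMeasurable]
    have h3 : σ1 = ∫ z, (φ1 z - θ) ^ 2 ∂ν := by
      rw [hσ1def]
      apply integral_congr_ae
      filter_upwards [hp1eq] with z hz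
      rw [hz]
    have h4 : ∫ z, (φ1 z - θ) ^ 2 ∂ν = ∫ z, φ1 z ^ 2 ∂ν - θ ^ 2 := by
      have he : (fun z => (φ1 z - θ) ^ 2)
          = fun z => (φ1 z ^ 2 - 2 * θ * φ1 z) + θ ^ 2 := by
        funext z; ring
      have hAint : Integrable (fun z => φ1 z ^ 2 - 2 * θ * φ1 z) ν := by
        exact hφ1sqint.sub (hφ1intν.const_mul (2 * θ))
      have hB : ∫ z, ((φ1 z ^ 2 - 2 * θ * φ1 z) + θ ^ 2) ∂ν
          = (∫ z, (φ1 z ^ 2 - 2 * θ * φ1 z) ∂ν) + ∫ _z : S, θ ^ 2 ∂ν :=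
        integral_add hAint (integrable_const _)
      have hC : ∫ z, (φ1 z ^ 2 - 2 * θ * φ1 z) ∂ν
          = (∫ z, φ1 z ^ 2 ∂ν) - ∫ z, 2 * θ * φ1 z ∂ν :=
        integral_sub hφ1sqint (hφ1intν.const_mul (2 * θ))
      rw [he, hB, hC, integral_const_mul, hintφ1, integral_const]
      simp
      ring
    rw [hσ1, variance_eq_sub hφ1X0L2]
    simp only [Pi.pow_apply]
    rw [h1, h2, h3, h4]
  -- main quantitative estimate
  set K : ℝ := 322 * s2 + 2 * |σ1| with hKdef
  have key : ∀ n : ℕ, 4 ≤ n →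
      |(n : ℝ) ^ 2 * variance (fun ω => Bn1 φ n (fun i => X i ω)) μ - σ1| ≤ K / n := by
    intro n hn4
    have hnR4 : (4 : ℝ) ≤ (n : ℝ) := by exact_mod_cast hn4
    have hnRpos : (0 : ℝ) < n := by linarith
    have hnne : (n : ℝ) ≠ 0 := ne_of_gt hnRpos
    have hne0 : ∀ j ∈ Finset.Ico 1 n, (0 : ℕ) ≠ j := fun j hj => by
      have := Finset.mem_Ico.1 hj; omega
    have hik : ∀ i : ℕ, ∀ k ∈ Finset.Ico (i + 1) n, i ≠ k := fun i k hk => by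
      have := Finset.mem_Ico.1 hk; omega
    have hmemlt : ∀ j ∈ Finset.Ico 1 n, 1 ≤ j ∧ j < n := fun j hj => Finset.mem_Ico.1 hj
    set mR : ℝ := (n : ℝ) - 1 with hmRdef
    have hmRpos : 0 < mR := by rw [hmRdef]; linarith
    have hcards : (Finset.Ico 1 n).card = n - 1 := Nat.card_Ico 1 n
    have hcastm : ((n - 1 : ℕ) : ℝ) = mR := by
      rw [hmRdef, Nat.cast_sub (by omega : 1 ≤ n)]; norm_num
    have hcast2 : ((n - 2 : ℕ) : ℝ) = (n : ℝ) - 2 := by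
      rw [Nat.cast_sub (by omega : 2 ≤ n)]; norm_num
    set cR : ℝ := (((n - 1).choose 2 : ℕ) : ℝ) with hcRdef
    have h2c : 2 * (n - 1).choose 2 = (n - 1) * (n - 2) := by
      rw [Nat.choose_two_right]
      have h21 : (n - 1) - 1 = n - 2 := by omega
      rw [h21]
      apply Nat.mul_div_cancel'
      have he : Even ((n - 2) * ((n - 2) + 1)) := Nat.even_mul_succ_self (n - 2)
      have h22 : (n - 2) + 1 = n - 1 := by omega
      rw [h22] at he
      rcases he with ⟨k, hk⟩
      exact ⟨k, by rw [Nat.mul_comm (n-1) (n-2), hk, Nat.two_mul]⟩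
    have hcReq : 2 * cR = mR * ((n : ℝ) - 2) := by
      have h : ((2 * (n - 1).choose 2 : ℕ) : ℝ) = 2 * cR := by
        rw [hcRdef]; push_cast; ring
      rw [← h, h2c, Nat.cast_mul, hcastm, hcast2]
    have hcRpos : 0 < cR := by nlinarith
    -- the centered sums
    set S1 : Ω → ℝ := fun ω => ∑ j ∈ Finset.Ico 1 n, T 0 j ω with hS1def
    set S2 : Ω → ℝ := fun ω => ∑ i ∈ Finset.Ico 1 n, ∑ j ∈ Finset.Ico (i + 1) n, T i j ω
      with hS2def
    set W : Ω → ℝ := fun ω => mR⁻¹ * S1 ω - cR⁻¹ * S2 ω with hWdef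
    -- rewrite Bn1 in terms of W
    have hBW : (fun ω => Bn1 φ n (fun i => X i ω)) = fun ω => (n : ℝ)⁻¹ * W ω := by
      funext ω
      simp only [Bn1, U12, U2]
      have hU12 : ((n : ℝ) - 1)⁻¹ * (∑ j ∈ Finset.Ico 1 n, φ (X 0 ω) (X j ω))
          = mR⁻¹ * S1 ω + θ := by
        have h1 : ∑ j ∈ Finset.Ico 1 n, φ (X 0 ω) (X j ω) = S1 ω + mR * θ := by
          calc ∑ j ∈ Finset.Ico 1 n, φ (X 0 ω) (X j ω)
              = ∑ j ∈ Finset.Ico 1 n, (T 0 j ω + θ) :=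
                Finset.sum_congr rfl fun j hj => by simp [hTdef, hψdef]
            _ = (∑ j ∈ Finset.Ico 1 n, T 0 j ω) + (Finset.Ico 1 n).card • θ := by
                rw [Finset.sum_add_distrib, Finset.sum_const]
            _ = S1 ω + mR * θ := by
                rw [hcards, nsmul_eq_mul, hcastm, hS1def]
        rw [h1, ← hmRdef]
        have hm : mR ≠ 0 := ne_of_gt hmRpos
        field_simp
      have hU2 : (((n - 1).choose 2 : ℕ) : ℝ)⁻¹ *
            (∑ i ∈ Finset.Ico 1 n, ∑ j ∈ Finset.Ico (i + 1) n, φ (X i ω) (X j ω))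
          = cR⁻¹ * S2 ω + θ := by
        have h1 : ∑ i ∈ Finset.Ico 1 n, ∑ j ∈ Finset.Ico (i + 1) n, φ (X i ω) (X j ω)
            = S2 ω + cR * θ := by
          calc ∑ i ∈ Finset.Ico 1 n, ∑ j ∈ Finset.Ico (i + 1) n, φ (X i ω) (X j ω)
              = ∑ i ∈ Finset.Ico 1 n,
                  ((∑ j ∈ Finset.Ico (i + 1) n, T i j ω) + ((n - (i + 1) : ℕ) : ℝ) * θ) := by
                refine Finset.sum_congr rfl fun i hi => ?_
                calc ∑ j ∈ Finset.Ico (i + 1) n, φ (X i ω) (X j ω)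
                    = ∑ j ∈ Finset.Ico (i + 1) n, (T i j ω + θ) :=
                      Finset.sum_congr rfl fun j hj => by simp [hTdef, hψdef]
                  _ = _ := by
                      rw [Finset.sum_add_distrib, Finset.sum_const, Nat.card_Ico, nsmul_eq_mul]
            _ = S2 ω + ∑ i ∈ Finset.Ico 1 n, ((n - (i + 1) : ℕ) : ℝ) * θ := by
                rw [Finset.sum_add_distrib, hS2def]
            _ = S2 ω + cR * θ := by
                congr 1
                rw [← Finset.sum_mul, ← Nat.cast_sum, BnAux.count_lemma n, hcRdef]
        rw [h1, ← hcRdef]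
        have hc : cR ≠ 0 := ne_of_gt hcRpos
        field_simp
      rw [hU12, hU2, hWdef]
      ring
    have hvar : (n : ℝ) ^ 2 * variance (fun ω => Bn1 φ n (fun i => X i ω)) μ
        = variance W μ := by
      rw [hBW]
      have h : (fun ω => (n : ℝ)⁻¹ * W ω) = ((n : ℝ)⁻¹ • W) := rfl
      rw [h, variance_smul]
      field_simp
    -- L² and integrability facts
    have hS1L2 : MemLp S1 2 μ :=
      memLp_finset_sum _ fun j hj => hT2 0 j (hne0 j hj)
    have hS2L2 : MemLp S2 2 μ :=
      memLp_finset_sum _ fun i _hi => memLp_finset_sum _ fun j hj => hT2 i j (hik i j hj)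
    have hWL2 : MemLp W 2 μ := (hS1L2.const_mul mR⁻¹).sub (hS2L2.const_mul cR⁻¹)
    have hS1int : Integrable S1 μ := hS1L2.integrable one_le_two
    have hS2int : Integrable S2 μ := hS2L2.integrable one_le_two
    have hES1 : ∫ ω, S1 ω ∂μ = 0 := by
      simp only [hS1def]
      rw [integral_finset_sum _ fun j hj => hTint 0 j (hne0 j hj)]
      exact Finset.sum_eq_zero fun j hj => hT0 0 j (hne0 j hj)
    have hES2 : ∫ ω, S2 ω ∂μ = 0 := by
      simp only [hS2def]
      rw [integral_finset_sum _ fun i _hi =>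
        integrable_finset_sum _ fun j hj => hTint i j (hik i j hj)]
      refine Finset.sum_eq_zero fun i _hi => ?_
      rw [integral_finset_sum _ fun j hj => hTint i j (hik i j hj)]
      exact Finset.sum_eq_zero fun j hj => hT0 i j (hik i j hj)
    have hEW : ∫ ω, W ω ∂μ = 0 := by
      simp only [hWdef]
      rw [integral_sub (hS1int.const_mul mR⁻¹) (hS2int.const_mul cR⁻¹),
        integral_const_mul, integral_const_mul, hES1, hES2]
      ring
    -- products of sums
    have hP11eq : (fun ω => S1 ω * S1 ω)
        = fun ω => ∑ j ∈ Finset.Ico 1 n, ∑ k ∈ Finset.Ico 1 n, T 0 j ω * T 0 k ω := by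
      funext ω; simp only [hS1def]; exact Finset.sum_mul_sum _ _ _ _
    have hP11int : Integrable (fun ω => S1 ω * S1 ω) μ := by
      rw [hP11eq]
      exact integrable_finset_sum _ fun j hj => integrable_finset_sum _ fun k hk =>
        hTTint 0 j 0 k (hne0 j hj) (hne0 k hk)
    have hP12eq : (fun ω => S1 ω * S2 ω)
        = fun ω => ∑ j ∈ Finset.Ico 1 n, ∑ i ∈ Finset.Ico 1 n, ∑ k ∈ Finset.Ico (i + 1) n,
            T 0 j ω * T i k ω := by
      funext ω; simp only [hS1def, hS2def]
      rw [Finset.sum_mul_sum]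
      exact Finset.sum_congr rfl fun j _ => Finset.sum_congr rfl fun i _ =>
        Finset.mul_sum _ _ _
    have hP12int : Integrable (fun ω => S1 ω * S2 ω) μ := by
      rw [hP12eq]
      exact integrable_finset_sum _ fun j hj => integrable_finset_sum _ fun i _hi =>
        integrable_finset_sum _ fun k hk => hTTint 0 j i k (hne0 j hj) (hik i k hk)
    have hP22eq : (fun ω => S2 ω * S2 ω)
        = fun ω => ∑ i ∈ Finset.Ico 1 n, ∑ k ∈ Finset.Ico 1 n, ∑ j ∈ Finset.Ico (i + 1) n,
            ∑ l ∈ Finset.Ico (k + 1) n, T i j ω * T k l ω := by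
      funext ω; simp only [hS2def]
      rw [Finset.sum_mul_sum]
      exact Finset.sum_congr rfl fun i _ => Finset.sum_congr rfl fun k _ =>
        Finset.sum_mul_sum _ _ _ _
    have hP22int : Integrable (fun ω => S2 ω * S2 ω) μ := by
      rw [hP22eq]
      exact integrable_finset_sum _ fun i _ => integrable_finset_sum _ fun k _ =>
        integrable_finset_sum _ fun j hj => integrable_finset_sum _ fun l hl =>
          hTTint i j k l (hik i j hj) (hik k l hl)
    set E11 : ℝ := ∫ ω, S1 ω * S1 ω ∂μ with hE11def
    set E12 : ℝ := ∫ ω, S1 ω * S2 ω ∂μ with hE12def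
    set E22 : ℝ := ∫ ω, S2 ω * S2 ω ∂μ with hE22def
    -- variance of W in terms of the three second moments
    have hVW : variance W μ = mR⁻¹ ^ 2 * E11 - 2 * (mR⁻¹ * cR⁻¹) * E12 + cR⁻¹ ^ 2 * E22 := by
      rw [variance_eq_sub hWL2]
      have hfun : (fun x => (W ^ 2) x)
          = fun ω => mR⁻¹ ^ 2 * (S1 ω * S1 ω) - (2 * (mR⁻¹ * cR⁻¹)) * (S1 ω * S2 ω)
              + cR⁻¹ ^ 2 * (S2 ω * S2 ω) := by
        funext ω; simp only [Pi.pow_apply, hWdef]; ring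
      have hInt1 : Integrable (fun ω => mR⁻¹ ^ 2 * (S1 ω * S1 ω)) μ := hP11int.const_mul _
      have hInt2 : Integrable (fun ω => (2 * (mR⁻¹ * cR⁻¹)) * (S1 ω * S2 ω)) μ :=
        hP12int.const_mul _
      have hInt3 : Integrable (fun ω => cR⁻¹ ^ 2 * (S2 ω * S2 ω)) μ := hP22int.const_mul _
      have hInt12 : Integrable (fun ω => mR⁻¹ ^ 2 * (S1 ω * S1 ω)
          - (2 * (mR⁻¹ * cR⁻¹)) * (S1 ω * S2 ω)) μ := by exact hInt1.sub hInt2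
      rw [hfun, integral_add hInt12 hInt3, integral_sub hInt1 hInt2,
        integral_const_mul, integral_const_mul, integral_const_mul, hEW]
      rw [← hE11def, ← hE12def, ← hE22def]
      ring
    -- exact value of E11
    have hE11val : E11 = mR * s2 + mR * ((n : ℝ) - 2) * σ1 := by
      have hsum : E11 = ∑ j ∈ Finset.Ico 1 n, ∑ k ∈ Finset.Ico 1 n,
          ∫ ω, T 0 j ω * T 0 k ω ∂μ := by
        rw [hE11def, hP11eq, integral_finset_sum _ fun j hj =>
          integrable_finset_sum _ fun k hk => hTTint 0 j 0 k (hne0 j hj) (hne0 k hk)]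
        exact Finset.sum_congr rfl fun j hj =>
          integral_finset_sum _ fun k hk => hTTint 0 j 0 k (hne0 j hj) (hne0 k hk)
      have hrow : ∀ j ∈ Finset.Ico 1 n,
          ∑ k ∈ Finset.Ico 1 n, ∫ ω, T 0 j ω * T 0 k ω ∂μ = s2 + ((n : ℝ) - 2) * σ1 := by
        intro j hj
        rw [← Finset.add_sum_erase _ _ hj]
        have hdiag : ∫ ω, T 0 j ω * T 0 j ω ∂μ = s2 := by
          rw [← hTsq 0 j (hne0 j hj)]
          exact integral_congr_ae (Eventually.of_forall fun ω => by ring)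
        have hoff : ∀ k ∈ (Finset.Ico 1 n).erase j, ∫ ω, T 0 j ω * T 0 k ω ∂μ = σ1 := by
          intro k hk
          have hkj : k ≠ j := (Finset.mem_erase.1 hk).1
          have hks : k ∈ Finset.Ico 1 n := (Finset.mem_erase.1 hk).2
          rw [hTsymm 0 j, hTsymm 0 k]
          exact hshared j k 0 (Ne.symm hkj) (hne0 j hj).symm (hne0 k hks).symm
        rw [hdiag, Finset.sum_congr rfl hoff, Finset.sum_const,
          Finset.card_erase_of_mem hj, hcards, nsmul_eq_mul]
        have : ((n - 1 - 1 : ℕ) : ℝ) = (n : ℝ) - 2 := by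
          rw [show n - 1 - 1 = n - 2 by omega, hcast2]
        rw [this]
      rw [hsum, Finset.sum_congr rfl hrow, Finset.sum_const, hcards, nsmul_eq_mul, hcastm]
      ring
    -- auxiliary positivity of indicators, cardinality bounds
    have hite : ∀ a b : ℕ, (0:ℝ) ≤ (if a = b then s2 else 0) := fun a b => by
      split <;> simp [hs2nonneg]
    have hcardIco : ∀ a : ℕ, ((Finset.Ico a n).card : ℝ) ≤ (n : ℝ) := by
      intro a
      have h : (Finset.Ico a n).card ≤ n := by rw [Nat.card_Ico]; omega
      exact_mod_cast h
    -- bound on E12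
    have hcross : ∀ j ∈ Finset.Ico 1 n, ∀ i ∈ Finset.Ico 1 n, ∀ k ∈ Finset.Ico (i + 1) n,
        |∫ ω, T 0 j ω * T i k ω ∂μ|
          ≤ (if i = j then s2 else 0) + (if k = j then s2 else 0) := by
      intro j hj i hi k hk
      have hij := hmemlt j hj
      have hii := hmemlt i hi
      have hikk := Finset.mem_Ico.1 hk
      by_cases h1 : i = j
      · subst h1
        have := hCS 0 i i k (hne0 i hi) (hik i k hk)
        simp only [eq_self_iff_true, if_true]
        linarith [hite k i]
      · by_cases h2 : k = j
        · subst h2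
          have := hCS 0 k i k (hne0 k hj) (hik i k hk)
          simp only [if_neg h1, eq_self_iff_true, if_true]
          linarith
        · rw [hTdisj 0 j i k (hne0 j hj) (hik i k hk) (by omega) (by omega)
            (Ne.symm h1) (Ne.symm h2)]
          simp [h1, h2]
    have hE12bound : |E12| ≤ 2 * s2 * (n : ℝ) ^ 2 := by
      have hsum : E12 = ∑ j ∈ Finset.Ico 1 n, ∑ i ∈ Finset.Ico 1 n,
          ∑ k ∈ Finset.Ico (i + 1) n, ∫ ω, T 0 j ω * T i k ω ∂μ := by
        rw [hE12def, hP12eq, integral_finset_sum _ fun j hj =>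
          integrable_finset_sum _ fun i _hi => integrable_finset_sum _ fun k hk =>
            hTTint 0 j i k (hne0 j hj) (hik i k hk)]
        refine Finset.sum_congr rfl fun j hj => ?_
        rw [integral_finset_sum _ fun i _hi => integrable_finset_sum _ fun k hk =>
          hTTint 0 j i k (hne0 j hj) (hik i k hk)]
        exact Finset.sum_congr rfl fun i _hi =>
          integral_finset_sum _ fun k hk => hTTint 0 j i k (hne0 j hj) (hik i k hk)
      have ha : ∀ j ∈ Finset.Ico 1 n,
          (∑ i ∈ Finset.Ico 1 n, ∑ k ∈ Finset.Ico (i + 1) n, (if i = j then s2 else 0))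
            ≤ (n : ℝ) * s2 := by
        intro j _hj
        have h1 : ∀ i ∈ Finset.Ico 1 n,
            (∑ k ∈ Finset.Ico (i + 1) n, (if i = j then s2 else 0))
              ≤ (n : ℝ) * (if i = j then s2 else 0) := by
          intro i _hi
          rw [Finset.sum_const, nsmul_eq_mul]
          exact mul_le_mul_of_nonneg_right (hcardIco (i + 1)) (hite i j)
        calc ∑ i ∈ Finset.Ico 1 n, ∑ k ∈ Finset.Ico (i + 1) n, (if i = j then s2 else 0)
            ≤ ∑ i ∈ Finset.Ico 1 n, (n : ℝ) * (if i = j then s2 else 0) :=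
              Finset.sum_le_sum h1
          _ = (n : ℝ) * ∑ i ∈ Finset.Ico 1 n, (if i = j then s2 else 0) :=
              (Finset.mul_sum _ _ _).symm
          _ ≤ (n : ℝ) * s2 :=
              mul_le_mul_of_nonneg_left (BnAux.sum_ite_le j hs2nonneg) (by positivity)
      have hb : ∀ j ∈ Finset.Ico 1 n,
          (∑ i ∈ Finset.Ico 1 n, ∑ k ∈ Finset.Ico (i + 1) n, (if k = j then s2 else 0))
            ≤ (n : ℝ) * s2 := by
        intro j _hj
        calc ∑ i ∈ Finset.Ico 1 n, ∑ k ∈ Finset.Ico (i + 1) n, (if k = j then s2 else 0)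
            ≤ ∑ i ∈ Finset.Ico 1 n, s2 :=
              Finset.sum_le_sum fun i _hi => BnAux.sum_ite_le j hs2nonneg
          _ = ((Finset.Ico 1 n).card : ℝ) * s2 := by rw [Finset.sum_const, nsmul_eq_mul]
          _ ≤ (n : ℝ) * s2 := mul_le_mul_of_nonneg_right (hcardIco 1) hs2nonneg
      calc |E12| = |∑ j ∈ Finset.Ico 1 n, ∑ i ∈ Finset.Ico 1 n,
          ∑ k ∈ Finset.Ico (i + 1) n, ∫ ω, T 0 j ω * T i k ω ∂μ| := by rw [hsum]
        _ ≤ ∑ j ∈ Finset.Ico 1 n, ∑ i ∈ Finset.Ico 1 n,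
            ∑ k ∈ Finset.Ico (i + 1) n, |∫ ω, T 0 j ω * T i k ω ∂μ| := by
            refine le_trans (Finset.abs_sum_le_sum_abs _ _)
              (Finset.sum_le_sum fun j _hj => ?_)
            refine le_trans (Finset.abs_sum_le_sum_abs _ _)
              (Finset.sum_le_sum fun i _hi => ?_)
            exact Finset.abs_sum_le_sum_abs _ _
        _ ≤ ∑ j ∈ Finset.Ico 1 n, ∑ i ∈ Finset.Ico 1 n, ∑ k ∈ Finset.Ico (i + 1) n,
              ((if i = j then s2 else 0) + (if k = j then s2 else 0)) :=
            Finset.sum_le_sum fun j hj => Finset.sum_le_sum fun i hi =>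
              Finset.sum_le_sum fun k hk => hcross j hj i hi k hk
        _ = ∑ j ∈ Finset.Ico 1 n,
              ((∑ i ∈ Finset.Ico 1 n, ∑ k ∈ Finset.Ico (i + 1) n, (if i = j then s2 else 0))
              + ∑ i ∈ Finset.Ico 1 n, ∑ k ∈ Finset.Ico (i + 1) n, (if k = j then s2 else 0)) := by
            simp only [Finset.sum_add_distrib]
        _ ≤ ∑ j ∈ Finset.Ico 1 n, ((n : ℝ) * s2 + (n : ℝ) * s2) :=
            Finset.sum_le_sum fun j hj => add_le_add (ha j hj) (hb j hj)
        _ = ((Finset.Ico 1 n).card : ℝ) * ((n : ℝ) * s2 + (n : ℝ) * s2) := by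
            rw [Finset.sum_const, nsmul_eq_mul]
        _ ≤ (n : ℝ) * ((n : ℝ) * s2 + (n : ℝ) * s2) :=
            mul_le_mul_of_nonneg_right (hcardIco 1) (by positivity)
        _ = 2 * s2 * (n : ℝ) ^ 2 := by ring
    -- bound on E22
    have hE22nonneg : 0 ≤ E22 := by
      rw [hE22def]; exact integral_nonneg fun ω => mul_self_nonneg _
    have hcross22 : ∀ i ∈ Finset.Ico 1 n, ∀ k ∈ Finset.Ico 1 n, ∀ j ∈ Finset.Ico (i + 1) n,
        ∀ l ∈ Finset.Ico (k + 1) n,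
        |∫ ω, T i j ω * T k l ω ∂μ| ≤ (if k = i then s2 else 0) + ((if j = k then s2 else 0)
          + ((if l = i then s2 else 0) + (if l = j then s2 else 0))) := by
      intro i _hi k _hk j hj l hl
      have hCSv := hCS i j k l (hik i j hj) (hik k l hl)
      by_cases h1 : k = i
      · rw [if_pos h1]; linarith [hite j k, hite l i, hite l j]
      · by_cases h2 : j = k
        · rw [if_neg h1, if_pos h2]; linarith [hite l i, hite l j]
        · by_cases h3 : l = i
          · rw [if_neg h1, if_neg h2, if_pos h3]; linarith [hite l j]
          · by_cases h4 : l = j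
            · rw [if_neg h1, if_neg h2, if_neg h3, if_pos h4]; linarith
            · rw [hTdisj i j k l (hik i j hj) (hik k l hl) (by omega) (by omega) (by omega)
                (by omega), if_neg h1, if_neg h2, if_neg h3, if_neg h4]
              simp
    have hE22bound : E22 ≤ 4 * s2 * (n : ℝ) ^ 3 := by
      have hsum : E22 = ∑ i ∈ Finset.Ico 1 n, ∑ k ∈ Finset.Ico 1 n,
          ∑ j ∈ Finset.Ico (i + 1) n, ∑ l ∈ Finset.Ico (k + 1) n,
            ∫ ω, T i j ω * T k l ω ∂μ := by
        rw [hE22def, hP22eq, integral_finset_sum _ fun i _ => integrable_finset_sum _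
          fun k _ => integrable_finset_sum _ fun j hj => integrable_finset_sum _ fun l hl =>
            hTTint i j k l (hik i j hj) (hik k l hl)]
        refine Finset.sum_congr rfl fun i _ => ?_
        rw [integral_finset_sum _ fun k _ => integrable_finset_sum _ fun j hj =>
          integrable_finset_sum _ fun l hl => hTTint i j k l (hik i j hj) (hik k l hl)]
        refine Finset.sum_congr rfl fun k _ => ?_
        rw [integral_finset_sum _ fun j hj => integrable_finset_sum _ fun l hl =>
          hTTint i j k l (hik i j hj) (hik k l hl)]
        exact Finset.sum_congr rfl fun j hj =>
          integral_finset_sum _ fun l hl => hTTint i j k l (hik i j hj) (hik k l hl)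
      have hinner : ∀ i ∈ Finset.Ico 1 n, ∀ k ∈ Finset.Ico 1 n,
          (∑ j ∈ Finset.Ico (i + 1) n, ∑ l ∈ Finset.Ico (k + 1) n,
            |∫ ω, T i j ω * T k l ω ∂μ|)
            ≤ (n : ℝ) ^ 2 * (if k = i then s2 else 0) + 3 * ((n : ℝ) * s2) := by
        intro i hi k hk
        have ht1 : (∑ j ∈ Finset.Ico (i + 1) n, ∑ l ∈ Finset.Ico (k + 1) n,
            (if k = i then s2 else 0)) ≤ (n : ℝ) ^ 2 * (if k = i then s2 else 0) := by
          calc ∑ j ∈ Finset.Ico (i + 1) n, ∑ l ∈ Finset.Ico (k + 1) n,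
              (if k = i then s2 else 0)
              ≤ ∑ _j ∈ Finset.Ico (i + 1) n, (n : ℝ) * (if k = i then s2 else 0) :=
                Finset.sum_le_sum fun j _ => by
                  rw [Finset.sum_const, nsmul_eq_mul]
                  exact mul_le_mul_of_nonneg_right (hcardIco (k + 1)) (hite k i)
            _ = ((Finset.Ico (i + 1) n).card : ℝ) * ((n : ℝ) * (if k = i then s2 else 0)) := by
                rw [Finset.sum_const, nsmul_eq_mul]
            _ ≤ (n : ℝ) * ((n : ℝ) * (if k = i then s2 else 0)) :=
                mul_le_mul_of_nonneg_right (hcardIco (i + 1))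
                  (mul_nonneg (le_of_lt hnRpos) (hite k i))
            _ = (n : ℝ) ^ 2 * (if k = i then s2 else 0) := by ring
        have ht2 : (∑ j ∈ Finset.Ico (i + 1) n, ∑ l ∈ Finset.Ico (k + 1) n,
            (if j = k then s2 else 0)) ≤ (n : ℝ) * s2 := by
          calc ∑ j ∈ Finset.Ico (i + 1) n, ∑ l ∈ Finset.Ico (k + 1) n, (if j = k then s2 else 0)
              ≤ ∑ j ∈ Finset.Ico (i + 1) n, (n : ℝ) * (if j = k then s2 else 0) :=
                Finset.sum_le_sum fun j _ => by
                  rw [Finset.sum_const, nsmul_eq_mul]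
                  exact mul_le_mul_of_nonneg_right (hcardIco (k + 1)) (hite j k)
            _ = (n : ℝ) * ∑ j ∈ Finset.Ico (i + 1) n, (if j = k then s2 else 0) :=
                (Finset.mul_sum _ _ _).symm
            _ ≤ (n : ℝ) * s2 :=
                mul_le_mul_of_nonneg_left (BnAux.sum_ite_le k hs2nonneg) (le_of_lt hnRpos)
        have ht3 : (∑ j ∈ Finset.Ico (i + 1) n, ∑ l ∈ Finset.Ico (k + 1) n,
            (if l = i then s2 else 0)) ≤ (n : ℝ) * s2 := by
          calc ∑ j ∈ Finset.Ico (i + 1) n, ∑ l ∈ Finset.Ico (k + 1) n, (if l = i then s2 else 0)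
              ≤ ∑ _j ∈ Finset.Ico (i + 1) n, s2 :=
                Finset.sum_le_sum fun j _ => BnAux.sum_ite_le i hs2nonneg
            _ = ((Finset.Ico (i + 1) n).card : ℝ) * s2 := by rw [Finset.sum_const, nsmul_eq_mul]
            _ ≤ (n : ℝ) * s2 := mul_le_mul_of_nonneg_right (hcardIco (i + 1)) hs2nonneg
        have ht4 : (∑ j ∈ Finset.Ico (i + 1) n, ∑ l ∈ Finset.Ico (k + 1) n,
            (if l = j then s2 else 0)) ≤ (n : ℝ) * s2 := by
          calc ∑ j ∈ Finset.Ico (i + 1) n, ∑ l ∈ Finset.Ico (k + 1) n, (if l = j then s2 else 0)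
              ≤ ∑ j ∈ Finset.Ico (i + 1) n, s2 :=
                Finset.sum_le_sum fun j _ => BnAux.sum_ite_le j hs2nonneg
            _ = ((Finset.Ico (i + 1) n).card : ℝ) * s2 := by rw [Finset.sum_const, nsmul_eq_mul]
            _ ≤ (n : ℝ) * s2 := mul_le_mul_of_nonneg_right (hcardIco (i + 1)) hs2nonneg
        calc ∑ j ∈ Finset.Ico (i + 1) n, ∑ l ∈ Finset.Ico (k + 1) n,
            |∫ ω, T i j ω * T k l ω ∂μ|
            ≤ ∑ j ∈ Finset.Ico (i + 1) n, ∑ l ∈ Finset.Ico (k + 1) n,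
              ((if k = i then s2 else 0) + ((if j = k then s2 else 0)
                + ((if l = i then s2 else 0) + (if l = j then s2 else 0)))) :=
              Finset.sum_le_sum fun j hj => Finset.sum_le_sum fun l hl =>
                hcross22 i hi k hk j hj l hl
          _ = (∑ j ∈ Finset.Ico (i + 1) n, ∑ l ∈ Finset.Ico (k + 1) n,
                (if k = i then s2 else 0))
              + ((∑ j ∈ Finset.Ico (i + 1) n, ∑ l ∈ Finset.Ico (k + 1) n,
                (if j = k then s2 else 0))
              + ((∑ j ∈ Finset.Ico (i + 1) n, ∑ l ∈ Finset.Ico (k + 1) n,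
                (if l = i then s2 else 0))
              + (∑ j ∈ Finset.Ico (i + 1) n, ∑ l ∈ Finset.Ico (k + 1) n,
                (if l = j then s2 else 0)))) := by
              simp only [Finset.sum_add_distrib]
          _ ≤ (n : ℝ) ^ 2 * (if k = i then s2 else 0) + 3 * ((n : ℝ) * s2) := by
              linarith
      calc E22 ≤ |E22| := le_abs_self _
        _ = |∑ i ∈ Finset.Ico 1 n, ∑ k ∈ Finset.Ico 1 n, ∑ j ∈ Finset.Ico (i + 1) n,
              ∑ l ∈ Finset.Ico (k + 1) n, ∫ ω, T i j ω * T k l ω ∂μ| := by rw [hsum]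
        _ ≤ ∑ i ∈ Finset.Ico 1 n, ∑ k ∈ Finset.Ico 1 n, ∑ j ∈ Finset.Ico (i + 1) n,
              ∑ l ∈ Finset.Ico (k + 1) n, |∫ ω, T i j ω * T k l ω ∂μ| := by
            refine le_trans (Finset.abs_sum_le_sum_abs _ _)
              (Finset.sum_le_sum fun i _ => ?_)
            refine le_trans (Finset.abs_sum_le_sum_abs _ _)
              (Finset.sum_le_sum fun k _ => ?_)
            refine le_trans (Finset.abs_sum_le_sum_abs _ _)
              (Finset.sum_le_sum fun j _ => ?_)
            exact Finset.abs_sum_le_sum_abs _ _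
        _ ≤ ∑ i ∈ Finset.Ico 1 n, ∑ k ∈ Finset.Ico 1 n,
              ((n : ℝ) ^ 2 * (if k = i then s2 else 0) + 3 * ((n : ℝ) * s2)) :=
            Finset.sum_le_sum fun i hi => Finset.sum_le_sum fun k hk => hinner i hi k hk
        _ ≤ ∑ i ∈ Finset.Ico 1 n, ((n : ℝ) ^ 2 * s2 + (n : ℝ) * (3 * ((n : ℝ) * s2))) := by
            refine Finset.sum_le_sum fun i _ => ?_
            rw [Finset.sum_add_distrib]
            apply add_le_add
            · rw [← Finset.mul_sum]
              exact mul_le_mul_of_nonneg_left (BnAux.sum_ite_le i hs2nonneg) (by positivity)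
            · rw [Finset.sum_const, nsmul_eq_mul]
              exact mul_le_mul_of_nonneg_right (hcardIco 1) (by positivity)
        _ = ((Finset.Ico 1 n).card : ℝ) * ((n : ℝ) ^ 2 * s2 + (n : ℝ) * (3 * ((n : ℝ) * s2)))
            := by rw [Finset.sum_const, nsmul_eq_mul]
        _ ≤ (n : ℝ) * ((n : ℝ) ^ 2 * s2 + (n : ℝ) * (3 * ((n : ℝ) * s2))) :=
            mul_le_mul_of_nonneg_right (hcardIco 1) (by positivity)
        _ = 4 * s2 * (n : ℝ) ^ 3 := by ring
    -- final algebraic assembly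
    have hm2 : (n : ℝ) - 2 = mR - 1 := by rw [hmRdef]; ring
    have hsplit : variance W μ - σ1 = (s2 - σ1) / mR - 2 * E12 / (mR * cR) + E22 / cR ^ 2 := by
      rw [hVW, hE11val, hm2]
      have h1 : mR ≠ 0 := ne_of_gt hmRpos
      have h2 : cR ≠ 0 := ne_of_gt hcRpos
      field_simp
      ring
    have hEtri : |variance W μ - σ1|
        ≤ |(s2 - σ1) / mR| + |2 * E12 / (mR * cR)| + |E22 / cR ^ 2| := by
      rw [hsplit]
      calc |(s2 - σ1) / mR - 2 * E12 / (mR * cR) + E22 / cR ^ 2|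
          ≤ |(s2 - σ1) / mR - 2 * E12 / (mR * cR)| + |E22 / cR ^ 2| := abs_add_le _ _
        _ ≤ |(s2 - σ1) / mR| + |2 * E12 / (mR * cR)| + |E22 / cR ^ 2| := by
            have := abs_sub ((s2 - σ1) / mR) (2 * E12 / (mR * cR))
            linarith
    have hdm : (n : ℝ) / 2 ≤ mR := by rw [hmRdef]; linarith
    have hdc : (n : ℝ) ^ 2 / 8 ≤ cR := by nlinarith
    have hb1 : |(s2 - σ1) / mR| ≤ (2 * s2 + 2 * |σ1|) / (n : ℝ) := by
      rw [abs_div, abs_of_pos hmRpos]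
      have hnum : |s2 - σ1| ≤ s2 + |σ1| := by
        calc |s2 - σ1| ≤ |s2| + |σ1| := abs_sub _ _
          _ = s2 + |σ1| := by rw [abs_of_nonneg hs2nonneg]
      calc |s2 - σ1| / mR ≤ (s2 + |σ1|) / ((n : ℝ) / 2) :=
            div_le_div₀ (by positivity) hnum (by positivity) hdm
        _ = (2 * s2 + 2 * |σ1|) / (n : ℝ) := by
            rw [div_div_eq_mul_div]; ring
    have hmc : (n : ℝ) ^ 3 / 16 ≤ mR * cR := by
      have h := mul_le_mul hdm hdc (by positivity) (le_trans (by positivity) hdm)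
      calc (n : ℝ) ^ 3 / 16 = (n : ℝ) / 2 * ((n : ℝ) ^ 2 / 8) := by ring
        _ ≤ mR * cR := h
    have hb2 : |2 * E12 / (mR * cR)| ≤ 64 * s2 / (n : ℝ) := by
      rw [abs_div, abs_of_pos (mul_pos hmRpos hcRpos)]
      have hnum : |2 * E12| ≤ 4 * s2 * (n : ℝ) ^ 2 := by
        rw [abs_mul, abs_two]
        linarith
      calc |2 * E12| / (mR * cR) ≤ (4 * s2 * (n : ℝ) ^ 2) / ((n : ℝ) ^ 3 / 16) :=
            div_le_div₀ (by positivity) hnum (by positivity) hmc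
        _ = 64 * s2 / (n : ℝ) := by
            rw [div_div_eq_mul_div]
            field_simp
            ring
    have hc2 : (n : ℝ) ^ 4 / 64 ≤ cR ^ 2 := by
      have h := mul_le_mul hdc hdc (by positivity) (le_trans (by positivity) hdc)
      calc (n : ℝ) ^ 4 / 64 = (n : ℝ) ^ 2 / 8 * ((n : ℝ) ^ 2 / 8) := by ring
        _ ≤ cR ^ 2 := by rw [pow_two cR]; exact h
    have hb3 : |E22 / cR ^ 2| ≤ 256 * s2 / (n : ℝ) := by
      rw [abs_div, abs_of_pos (by positivity : (0:ℝ) < cR ^ 2)]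
      have hnum : |E22| ≤ 4 * s2 * (n : ℝ) ^ 3 := by
        rw [abs_of_nonneg hE22nonneg]; exact hE22bound
      calc |E22| / cR ^ 2 ≤ (4 * s2 * (n : ℝ) ^ 3) / ((n : ℝ) ^ 4 / 64) :=
            div_le_div₀ (by positivity) hnum (by positivity) hc2
        _ = 256 * s2 / (n : ℝ) := by
            rw [div_div_eq_mul_div]
            field_simp
            ring
    rw [hvar]
    calc |variance W μ - σ1|
        ≤ (2 * s2 + 2 * |σ1|) / (n : ℝ) + 64 * s2 / (n : ℝ) + 256 * s2 / (n : ℝ) := by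
          linarith
      _ = K / (n : ℝ) := by
          rw [hKdef, ← add_div, ← add_div]
          congr 1
          ring
  -- conclusion
  have htend0 : Tendsto (fun n : ℕ =>
      (n : ℝ) ^ 2 * variance (fun ω => Bn1 φ n (fun i => X i ω)) μ - σ1) atTop (nhds 0) := by
    apply squeeze_zero_norm' _ (tendsto_const_div_atTop_nhds_zero_nat K)
    filter_upwards [eventually_ge_atTop 4] with n hn
    rw [Real.norm_eq_abs]
    exact key n hn
  have h := htend0.add_const σ1
  simp only [sub_add_cancel, zero_add] at h
  rw [hσeq]
  exact h
end

section
/- Let X_1, X_2, … be i.i.d. S-valued random variables with symmetric measurable kernel φ satisfying E[φ(X_1,X_2)^2] < ∞, and let U_n = C(n,2)^{-1} Σ_{1≤i<j≤n} φ(X_i,X_j). Then U_n converges to θ = E[φ(X_1,X_2)] in L^2, and hence in probability, as n → ∞. -/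
open MeasureTheory ProbabilityTheory Finset Filter

/-- The combined-sample U-statistic
`U_n = C(n,2)⁻¹ ∑_{0 ≤ i < j ≤ n-1} φ(x i, x j)`. -/
noncomputable def Ustat {S : Type*} (φ : S → S → ℝ) (n : ℕ) (x : ℕ → S) : ℝ :=
  ((n.choose 2 : ℕ) : ℝ)⁻¹ *
    ∑ i ∈ Finset.range n, ∑ j ∈ Finset.Ico (i + 1) n, φ (x i) (x j)

lemma Ustat_eLpNorm_two_eq {Ω : Type*} [MeasurableSpace Ω] {μ : Measure Ω} {g : Ω → ℝ}
    (hi : Integrable (fun ω => g ω ^ 2) μ) :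
    eLpNorm g 2 μ = (ENNReal.ofReal (∫ ω, g ω ^ 2 ∂μ)) ^ (1/2 : ℝ) := by
  rw [eLpNorm_eq_lintegral_rpow_enorm_toReal (by norm_num) (by norm_num)]
  have h2 : (2 : ENNReal).toReal = 2 := by norm_num
  rw [h2]
  congr 1
  rw [ofReal_integral_eq_lintegral_ofReal hi (Filter.Eventually.of_forall fun ω => sq_nonneg _)]
  refine lintegral_congr fun ω => ?_
  rw [← ofReal_norm, ENNReal.ofReal_rpow_of_nonneg (norm_nonneg _) (by norm_num)]
  congr 1
  rw [Real.rpow_two, Real.norm_eq_abs, sq_abs]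


def UT (n : ℕ) : Finset ((_ : ℕ) × ℕ) := (Finset.range n).sigma fun i => Finset.Ico (i+1) n

lemma mem_UT {n : ℕ} {p : (_ : ℕ) × ℕ} : p ∈ UT n ↔ p.1 < p.2 ∧ p.2 < n := by
  simp only [UT, Finset.mem_sigma, Finset.mem_range, Finset.mem_Ico]
  omega

lemma UT_card (n : ℕ) : (UT n).card = n.choose 2 := by
  rw [UT, Finset.card_sigma, Nat.choose_two_right, ← Finset.sum_range_id,
    ← Finset.sum_range_reflect (fun j => j) n]
  refine Finset.sum_congr rfl fun i hi => ?_
  rw [Nat.card_Ico]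
  omega

lemma UT_sum (n : ℕ) (f : ℕ → ℕ → ℝ) :
    ∑ i ∈ Finset.range n, ∑ j ∈ Finset.Ico (i+1) n, f i j = ∑ p ∈ UT n, f p.1 p.2 :=
  Finset.sum_sigma' _ _ _

lemma UT_filter_fst_card (n a : ℕ) : ((UT n).filter (fun q => q.1 = a)).card ≤ n := by
  have hsub : (UT n).filter (fun q => q.1 = a) ⊆
      ({a} : Finset ℕ).sigma (fun _ => Finset.range n) := by
    intro q hq
    simp only [Finset.mem_filter, mem_UT, Finset.mem_sigma, Finset.mem_range,
      Finset.mem_singleton] at *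
    omega
  calc ((UT n).filter (fun q => q.1 = a)).card
      ≤ (({a} : Finset ℕ).sigma (fun _ => Finset.range n)).card := Finset.card_le_card hsub
    _ = n := by simp [Finset.card_sigma]

lemma UT_filter_snd_card (n b : ℕ) : ((UT n).filter (fun q => q.2 = b)).card ≤ n := by
  have hsub : (UT n).filter (fun q => q.2 = b) ⊆
      (Finset.range n).sigma (fun _ => ({b} : Finset ℕ)) := by
    intro q hq
    simp only [Finset.mem_filter, mem_UT, Finset.mem_sigma, Finset.mem_range,
      Finset.mem_singleton] at *
    omega
  calc ((UT n).filter (fun q => q.2 = b)).card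
      ≤ ((Finset.range n).sigma (fun _ => ({b} : Finset ℕ))).card := Finset.card_le_card hsub
    _ = n := by simp [Finset.card_sigma]

lemma UT_filter_ov_card (n : ℕ) (p : (_ : ℕ) × ℕ) :
    ((UT n).filter (fun q => q.1 = p.1 ∨ q.1 = p.2 ∨ q.2 = p.1 ∨ q.2 = p.2)).card ≤ 4 * n := by
  rw [Finset.filter_or, Finset.filter_or, Finset.filter_or]
  calc _ ≤ _ := Finset.card_union_le _ _
    _ ≤ 4 * n := by
        have h1 := UT_filter_fst_card n p.1
        have h2 := UT_filter_fst_card n p.2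
        have h3 := UT_filter_snd_card n p.1
        have h4 := UT_filter_snd_card n p.2
        have h5 := Finset.card_union_le ((UT n).filter (fun q => q.1 = p.2))
          (((UT n).filter (fun q => q.2 = p.1)) ∪ ((UT n).filter (fun q => q.2 = p.2)))
        have h6 := Finset.card_union_le ((UT n).filter (fun q => q.2 = p.1))
          ((UT n).filter (fun q => q.2 = p.2))
        omega


/-- for an i.i.d. sequence `X 0, X 1, …` with
`E[φ(X₁,X₂)²] < ∞`, the combined-sample U-statistics `U_n` converge to
`θ = E[φ(X₁,X₂)]` in `L²`, and hence in probability (in measure), as `n → ∞`. -/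
theorem combined_Ustat_L2_and_in_probability {Ω S : Type*} [MeasurableSpace Ω]
    [mS : MeasurableSpace S] (μ : Measure Ω) [IsProbabilityMeasure μ]
    (φ : S → S → ℝ) (hφm : Measurable (Function.uncurry φ))
    (hφs : ∀ a b, φ a b = φ b a)
    (X : ℕ → Ω → S) (hXm : ∀ i, Measurable (X i))
    (hindep : iIndepFun (m := fun _ : ℕ => mS) X μ)
    (hident : ∀ i, IdentDistrib (X i) (X 0) μ μ)
    (hL2 : Integrable (fun ω => (φ (X 0 ω) (X 1 ω)) ^ 2) μ)
    (θ : ℝ) (hθ : θ = ∫ ω, φ (X 0 ω) (X 1 ω) ∂μ) :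
    Tendsto (fun n : ℕ => ∫ ω, (Ustat φ n (fun i => X i ω) - θ) ^ 2 ∂μ)
        atTop (nhds 0) ∧
      TendstoInMeasure μ (fun n : ℕ => fun ω => Ustat φ n (fun i => X i ω))
        atTop (fun _ => θ) := by
  classical
  have hXm' : ∀ i j : ℕ, Measurable fun ω => (X i ω, X j ω) :=
    fun i j => (hXm i).prodMk (hXm j)
  have hYm : ∀ i j, Measurable fun ω => φ (X i ω) (X j ω) := fun i j => hφm.comp (hXm' i j)
  have hψm : ∀ i j, Measurable fun ω => φ (X i ω) (X j ω) - θ :=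
    fun i j => (hYm i j).sub measurable_const
  have hum : Measurable fun p : S × S => φ p.1 p.2 - θ := hφm.sub measurable_const
  have hpair : ∀ i j : ℕ, i ≠ j →
      IdentDistrib (fun ω => (X i ω, X j ω)) (fun ω => (X 0 ω, X 1 ω)) μ μ := by
    intro i j hij
    refine ⟨(hXm' i j).aemeasurable, (hXm' 0 1).aemeasurable, ?_⟩
    rw [(indepFun_iff_map_prod_eq_prod_map_map (hXm i).aemeasurable
          (hXm j).aemeasurable).mp (hindep.indepFun hij),
        (indepFun_iff_map_prod_eq_prod_map_map (hXm 0).aemeasurable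
          (hXm 1).aemeasurable).mp (hindep.indepFun (by norm_num : (0:ℕ) ≠ 1)),
        (hident i).map_eq, (hident j).map_eq, (hident 1).map_eq]
  have hψpair : ∀ i j : ℕ, i ≠ j →
      IdentDistrib (fun ω => φ (X i ω) (X j ω) - θ)
        (fun ω => φ (X 0 ω) (X 1 ω) - θ) μ μ :=
    fun i j hij => (hpair i j hij).comp hum
  have hsqpair : ∀ i j : ℕ, i ≠ j →
      IdentDistrib (fun ω => (φ (X i ω) (X j ω) - θ) ^ 2)
        (fun ω => (φ (X 0 ω) (X 1 ω) - θ) ^ 2) μ μ :=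
    fun i j hij => (hpair i j hij).comp (hum.pow_const 2)
  have hY01L2 : MemLp (fun ω => φ (X 0 ω) (X 1 ω)) 2 μ :=
    (memLp_two_iff_integrable_sq (hYm 0 1).aestronglyMeasurable).mpr hL2
  have hY01int : Integrable (fun ω => φ (X 0 ω) (X 1 ω)) μ := hY01L2.integrable one_le_two
  have hψ01L2 : MemLp (fun ω => φ (X 0 ω) (X 1 ω) - θ) 2 μ := hY01L2.sub (memLp_const θ)
  have hψ01sqint : Integrable (fun ω => (φ (X 0 ω) (X 1 ω) - θ) ^ 2) μ :=
    (memLp_two_iff_integrable_sq hψ01L2.aestronglyMeasurable).mp hψ01L2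
  set σ2 : ℝ := ∫ ω, (φ (X 0 ω) (X 1 ω) - θ) ^ 2 ∂μ with hσ2
  have hσ2nonneg : 0 ≤ σ2 := integral_nonneg fun ω => sq_nonneg _
  have hsqint : ∀ i j : ℕ, i ≠ j → Integrable (fun ω => (φ (X i ω) (X j ω) - θ) ^ 2) μ :=
    fun i j hij => ((hsqpair i j hij).integrable_iff).mpr hψ01sqint
  have hsqval : ∀ i j : ℕ, i ≠ j → ∫ ω, (φ (X i ω) (X j ω) - θ) ^ 2 ∂μ = σ2 :=
    fun i j hij => (hsqpair i j hij).integral_eq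
  have hψint : ∀ i j : ℕ, i ≠ j → Integrable (fun ω => φ (X i ω) (X j ω) - θ) μ :=
    fun i j hij => ((hψpair i j hij).integrable_iff).mpr (hY01int.sub (integrable_const θ))
  have hmean0 : ∀ i j : ℕ, i ≠ j → ∫ ω, (φ (X i ω) (X j ω) - θ) ∂μ = 0 := by
    intro i j hij
    rw [(hψpair i j hij).integral_eq, integral_sub hY01int (integrable_const θ),
      integral_const]
    simp [measure_univ, ← hθ]
  have hprod : ∀ i j k l : ℕ, i ≠ j → k ≠ l →
      Integrable (fun ω => (φ (X i ω) (X j ω) - θ) * (φ (X k ω) (X l ω) - θ)) μ := by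
    intro i j k l hij hkl
    refine Integrable.mono' (((hsqint i j hij).add (hsqint k l hkl)).div_const 2)
      ((hψm i j).mul (hψm k l)).aestronglyMeasurable ?_
    filter_upwards with ω
    simp only [Pi.add_apply]
    rw [Real.norm_eq_abs, abs_mul]
    nlinarith [sq_nonneg (|φ (X i ω) (X j ω) - θ| - |φ (X k ω) (X l ω) - θ|),
      sq_abs (φ (X i ω) (X j ω) - θ), sq_abs (φ (X k ω) (X l ω) - θ),
      abs_nonneg (φ (X i ω) (X j ω) - θ), abs_nonneg (φ (X k ω) (X l ω) - θ)]
  have hprodle : ∀ i j k l : ℕ, i ≠ j → k ≠ l →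
      ∫ ω, (φ (X i ω) (X j ω) - θ) * (φ (X k ω) (X l ω) - θ) ∂μ ≤ σ2 := by
    intro i j k l hij hkl
    have h1 : ∫ ω, ((φ (X i ω) (X j ω) - θ) ^ 2 + (φ (X k ω) (X l ω) - θ) ^ 2) / 2 ∂μ = σ2 := by
      rw [integral_div, integral_add (hsqint i j hij) (hsqint k l hkl),
        hsqval i j hij, hsqval k l hkl]
      ring
    calc ∫ ω, (φ (X i ω) (X j ω) - θ) * (φ (X k ω) (X l ω) - θ) ∂μ
        ≤ ∫ ω, ((φ (X i ω) (X j ω) - θ) ^ 2 + (φ (X k ω) (X l ω) - θ) ^ 2) / 2 ∂μ := by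
          refine integral_mono (hprod i j k l hij hkl)
            (((hsqint i j hij).add (hsqint k l hkl)).div_const 2) fun ω => ?_
          nlinarith [sq_nonneg ((φ (X i ω) (X j ω) - θ) - (φ (X k ω) (X l ω) - θ))]
      _ = σ2 := h1
  have hzero : ∀ i j k l : ℕ, i ≠ j → k ≠ l → i ≠ k → i ≠ l → j ≠ k → j ≠ l →
      ∫ ω, (φ (X i ω) (X j ω) - θ) * (φ (X k ω) (X l ω) - θ) ∂μ = 0 := by
    intro i j k l hij hkl hik hil hjk hjl
    have hi : IndepFun (fun ω => φ (X i ω) (X j ω) - θ) (fun ω => φ (X k ω) (X l ω) - θ) μ :=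
      (hindep.indepFun_prodMk_prodMk hXm i j k l hik hil hjk hjl).comp hum hum
    rw [hi.integral_fun_mul_eq_mul_integral (hψm i j).aestronglyMeasurable (hψm k l).aestronglyMeasurable,
      hmean0 i j hij, hmean0 k l hkl, mul_zero]

  -- per-n expansion
  have hcne : ∀ n : ℕ, 2 ≤ n → ((n.choose 2 : ℕ) : ℝ) ≠ 0 := fun n hn =>
    Nat.cast_ne_zero.mpr (Nat.choose_pos (by omega)).ne'
  have hTne : ∀ n : ℕ, ∀ p ∈ UT n, p.1 ≠ p.2 := fun n p hp => (mem_UT.mp hp).1.ne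
  have hU : ∀ n : ℕ, 2 ≤ n → ∀ ω, Ustat φ n (fun i => X i ω) - θ
      = ((n.choose 2 : ℕ) : ℝ)⁻¹ * ∑ p ∈ UT n, (φ (X p.1 ω) (X p.2 ω) - θ) := by
    intro n hn ω
    rw [Finset.sum_sub_distrib, Finset.sum_const, UT_card, mul_sub, nsmul_eq_mul,
      ← mul_assoc, inv_mul_cancel₀ (hcne n hn), one_mul]
    simp only [Ustat]
    rw [UT_sum n]
  have hexp : ∀ n : ℕ, ∀ ω : Ω, (∑ p ∈ UT n, (φ (X p.1 ω) (X p.2 ω) - θ)) ^ 2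
      = ∑ p ∈ UT n, ∑ q ∈ UT n,
          (φ (X p.1 ω) (X p.2 ω) - θ) * (φ (X q.1 ω) (X q.2 ω) - θ) := by
    intro n ω; rw [sq, Finset.sum_mul_sum]
  have hIexp : ∀ n : ℕ, Integrable (fun ω => ∑ p ∈ UT n, ∑ q ∈ UT n,
      (φ (X p.1 ω) (X p.2 ω) - θ) * (φ (X q.1 ω) (X q.2 ω) - θ)) μ :=
    fun n => integrable_finset_sum _ fun p hp => integrable_finset_sum _ fun q hq =>
      hprod _ _ _ _ (hTne n p hp) (hTne n q hq)
  have hIsum : ∀ n : ℕ, ∫ ω, (∑ p ∈ UT n, ∑ q ∈ UT n,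
        (φ (X p.1 ω) (X p.2 ω) - θ) * (φ (X q.1 ω) (X q.2 ω) - θ)) ∂μ
      = ∑ p ∈ UT n, ∑ q ∈ UT n,
          ∫ ω, (φ (X p.1 ω) (X p.2 ω) - θ) * (φ (X q.1 ω) (X q.2 ω) - θ) ∂μ := by
    intro n
    rw [integral_finset_sum _ (fun p hp => integrable_finset_sum _ fun q hq =>
      hprod _ _ _ _ (hTne n p hp) (hTne n q hq))]
    exact Finset.sum_congr rfl fun p hp => integral_finset_sum _ fun q hq =>
      hprod _ _ _ _ (hTne n p hp) (hTne n q hq)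
  have hinner : ∀ n : ℕ, ∀ p ∈ UT n,
      ∑ q ∈ UT n, ∫ ω, (φ (X p.1 ω) (X p.2 ω) - θ) * (φ (X q.1 ω) (X q.2 ω) - θ) ∂μ
        ≤ 4 * (n : ℝ) * σ2 := by
    intro n p hp
    rw [← Finset.sum_filter_add_sum_filter_not (UT n)
      (fun q => q.1 = p.1 ∨ q.1 = p.2 ∨ q.2 = p.1 ∨ q.2 = p.2)]
    have h2 : ∑ q ∈ (UT n).filter
        (fun q => ¬(q.1 = p.1 ∨ q.1 = p.2 ∨ q.2 = p.1 ∨ q.2 = p.2)),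
        ∫ ω, (φ (X p.1 ω) (X p.2 ω) - θ) * (φ (X q.1 ω) (X q.2 ω) - θ) ∂μ = 0 := by
      refine Finset.sum_eq_zero fun q hq => ?_
      simp only [Finset.mem_filter] at hq
      obtain ⟨hqT, hq2⟩ := hq
      push_neg at hq2
      obtain ⟨h1, h2, h3, h4⟩ := hq2
      exact hzero p.1 p.2 q.1 q.2 (hTne n p hp) (hTne n q hqT)
        (Ne.symm h1) (Ne.symm h3) (Ne.symm h2) (Ne.symm h4)
    rw [h2, add_zero]
    have h3 : ∑ q ∈ (UT n).filter (fun q => q.1 = p.1 ∨ q.1 = p.2 ∨ q.2 = p.1 ∨ q.2 = p.2),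
        ∫ ω, (φ (X p.1 ω) (X p.2 ω) - θ) * (φ (X q.1 ω) (X q.2 ω) - θ) ∂μ
        ≤ ((UT n).filter (fun q => q.1 = p.1 ∨ q.1 = p.2 ∨ q.2 = p.1 ∨ q.2 = p.2)).card • σ2 := by
      refine Finset.sum_le_card_nsmul _ _ _ fun q hq => ?_
      simp only [Finset.mem_filter] at hq
      exact hprodle p.1 p.2 q.1 q.2 (hTne n p hp) (hTne n q hq.1)
    refine h3.trans ?_
    rw [nsmul_eq_mul]
    have h4 : ((((UT n).filter
        (fun q => q.1 = p.1 ∨ q.1 = p.2 ∨ q.2 = p.1 ∨ q.2 = p.2)).card : ℝ)) ≤ 4 * (n : ℝ) := by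
      have := UT_filter_ov_card n p
      exact_mod_cast this
    exact mul_le_mul_of_nonneg_right h4 hσ2nonneg
  have hVle : ∀ n : ℕ, 2 ≤ n → ∫ ω, (Ustat φ n (fun i => X i ω) - θ) ^ 2 ∂μ
      ≤ ((n.choose 2 : ℕ) : ℝ)⁻¹ * (4 * (n : ℝ) * σ2) := by
    intro n hn
    have hrw : (fun ω => (Ustat φ n (fun i => X i ω) - θ) ^ 2)
        = fun ω => (((n.choose 2 : ℕ) : ℝ)⁻¹) ^ 2 * ∑ p ∈ UT n, ∑ q ∈ UT n,
            (φ (X p.1 ω) (X p.2 ω) - θ) * (φ (X q.1 ω) (X q.2 ω) - θ) :=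
      funext fun ω => by rw [hU n hn ω, mul_pow, hexp n ω]
    calc ∫ ω, (Ustat φ n (fun i => X i ω) - θ) ^ 2 ∂μ
        = (((n.choose 2 : ℕ) : ℝ)⁻¹) ^ 2 * ∑ p ∈ UT n, ∑ q ∈ UT n,
            ∫ ω, (φ (X p.1 ω) (X p.2 ω) - θ) * (φ (X q.1 ω) (X q.2 ω) - θ) ∂μ := by
          rw [hrw]
          rw [integral_const_mul]
          rw [hIsum n]
      _ ≤ (((n.choose 2 : ℕ) : ℝ)⁻¹) ^ 2 * (((n.choose 2 : ℕ) : ℝ) * (4 * (n : ℝ) * σ2)) := by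
          refine mul_le_mul_of_nonneg_left ?_ (by positivity)
          calc ∑ p ∈ UT n, ∑ q ∈ UT n,
              ∫ ω, (φ (X p.1 ω) (X p.2 ω) - θ) * (φ (X q.1 ω) (X q.2 ω) - θ) ∂μ
              ≤ ∑ _p ∈ UT n, 4 * (n : ℝ) * σ2 :=
                Finset.sum_le_sum fun p hp => hinner n p hp
            _ = ((n.choose 2 : ℕ) : ℝ) * (4 * (n : ℝ) * σ2) := by
                rw [Finset.sum_const, UT_card, nsmul_eq_mul]
      _ = ((n.choose 2 : ℕ) : ℝ)⁻¹ * (4 * (n : ℝ) * σ2) := by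
          rw [pow_two, mul_assoc, ← mul_assoc (((n.choose 2 : ℕ) : ℝ))⁻¹
            (((n.choose 2 : ℕ) : ℝ)) _, inv_mul_cancel₀ (hcne n hn), one_mul]
  have hbound : ∀ n : ℕ, 2 ≤ n →
      ((n.choose 2 : ℕ) : ℝ)⁻¹ * (4 * (n : ℝ) * σ2) = 8 * σ2 / ((n : ℝ) - 1) := by
    intro n hn
    have hn' : (2 : ℝ) ≤ (n : ℝ) := by exact_mod_cast hn
    have h0 : (n : ℝ) ≠ 0 := by linarith
    have h1 : (n : ℝ) - 1 ≠ 0 := by linarith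
    rw [Nat.cast_choose_two]
    field_simp
    ring
  have hg0 : Tendsto (fun n : ℕ => 8 * σ2 / ((n : ℝ) - 1)) atTop (nhds 0) := by
    refine Tendsto.div_atTop tendsto_const_nhds ?_
    have := tendsto_atTop_add_const_right atTop (-1 : ℝ) tendsto_natCast_atTop_atTop
    simpa [sub_eq_add_neg] using this
  have hL2conv : Tendsto (fun n : ℕ => ∫ ω, (Ustat φ n (fun i => X i ω) - θ) ^ 2 ∂μ)
      atTop (nhds 0) := by
    refine squeeze_zero' (Filter.Eventually.of_forall fun n =>
      integral_nonneg fun ω => sq_nonneg _) ?_ hg0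
    filter_upwards [eventually_ge_atTop 2] with n hn
    rw [← hbound n hn]
    exact hVle n hn
  have hVint : ∀ n : ℕ, 2 ≤ n →
      Integrable (fun ω => (Ustat φ n (fun i => X i ω) - θ) ^ 2) μ := by
    intro n hn
    have hrw : (fun ω => (Ustat φ n (fun i => X i ω) - θ) ^ 2)
        = fun ω => (((n.choose 2 : ℕ) : ℝ)⁻¹) ^ 2 * ∑ p ∈ UT n, ∑ q ∈ UT n,
            (φ (X p.1 ω) (X p.2 ω) - θ) * (φ (X q.1 ω) (X q.2 ω) - θ) :=
      funext fun ω => by rw [hU n hn ω, mul_pow, hexp n ω]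
    rw [hrw]
    exact (hIexp n).const_mul _
  have hmUs : ∀ n : ℕ, AEStronglyMeasurable (fun ω => Ustat φ n (fun i => X i ω)) μ := by
    intro n
    apply Measurable.aestronglyMeasurable
    simp only [Ustat]
    exact measurable_const.mul (Finset.measurable_sum _ fun i _ =>
      Finset.measurable_sum _ fun j _ => hYm i j)
  refine ⟨hL2conv, tendstoInMeasure_of_tendsto_eLpNorm (p := 2) (by norm_num)
    hmUs aestronglyMeasurable_const ?_⟩
  have h1 : Tendsto (fun n : ℕ =>
      (ENNReal.ofReal (∫ ω, (Ustat φ n (fun i => X i ω) - θ) ^ 2 ∂μ)) ^ (1/2 : ℝ))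
      atTop (nhds 0) := by
    have h2 := Filter.Tendsto.ennrpow_const (1/2) (ENNReal.tendsto_ofReal hL2conv)
    rw [ENNReal.ofReal_zero, ENNReal.zero_rpow_of_pos (by norm_num)] at h2
    exact h2
  refine h1.congr' ?_
  filter_upwards [eventually_ge_atTop 2] with n hn
  rw [show ((fun ω => Ustat φ n (fun i => X i ω)) - fun _ => θ)
      = (fun ω => Ustat φ n (fun i => X i ω) - θ) from rfl]
  exact (Ustat_eLpNorm_two_eq (hVint n hn)).symm
end
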